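/- arXiv:0808.1669 — 7 statements merged into one kernel-verified Lean document; each statement's English description precedes it below -/
import Mathlib

section
/- Let X₁, X₂ be i.i.d. random variables with values in [0,1] and common mean m, and let 0 ≤ t < 2m. If additionally t/2 ≤ m ≤ (2t+1)/5, then P(X₁ + X₂ ≤ t) ≤ 4(1-m)²/(2-t)². -/
open MeasureTheory

set_option maxHeartbeats 1000000 in
/-- Hoeffding–Shrikande bound (middle case) for the sum of two i.i.d. random variables
on `[0,1]` with mean `m`: if `t/2 ≤ m ≤ (2t+1)/5` then
`P(X₁ + X₂ ≤ t) ≤ 4(1-m)²/(2-t)²`. -/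
theorem stmt_2 (μ : Measure ℝ) [IsProbabilityMeasure μ]
    (hsupp : μ (Set.Icc (0:ℝ) 1)ᶜ = 0)
    (m t : ℝ) (hm0 : 0 < m) (hm1 : m < 1)
    (hmean : ∫ x, x ∂μ = m) (ht0 : 0 ≤ t) (ht : t < 2 * m)
    (h1 : t / 2 ≤ m) (h2 : m ≤ (2 * t + 1) / 5) :
    (μ.prod μ) {p : ℝ × ℝ | p.1 + p.2 ≤ t}
      ≤ ENNReal.ofReal (4 * (1 - m) ^ 2 / (2 - t) ^ 2) := by
  set S : Set (ℝ × ℝ) := {p : ℝ × ℝ | p.1 + p.2 ≤ t} with hSdef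
  have hSm : MeasurableSet S := measurableSet_le (measurable_fst.add measurable_snd) measurable_const
  have hae : ∀ᵐ x ∂μ, x ∈ Set.Icc (0:ℝ) 1 := by
    rw [ae_iff]
    simpa [Set.compl_def] using hsupp
  have ht2 : (0:ℝ) < 2 - t := by linarith
  set B : Set ℝ := Set.Iic (t/2) with hBdef
  have hBm : MeasurableSet B := measurableSet_Iic
  set r : ℝ := (μ B).toReal with hrdef
  have hrB : μ B = ENNReal.ofReal r := (ENNReal.ofReal_toReal (measure_ne_top μ B)).symm
  have hr0 : 0 ≤ r := ENNReal.toReal_nonneg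
  have hr1 : r ≤ 1 := by
    have := ENNReal.toReal_mono (ENNReal.one_ne_top) (prob_le_one (μ := μ) (s := B))
    simpa using this
  -- integrability
  have hintx : Integrable (fun x : ℝ => x) μ := by
    refine (integrable_const (1:ℝ)).mono' measurable_id.aestronglyMeasurable ?_
    filter_upwards [hae] with x hx
    rw [Real.norm_eq_abs, abs_le]
    exact ⟨by linarith [hx.1], hx.2⟩
  have hint1x : Integrable (fun x : ℝ => 1 - x) μ := (integrable_const 1).sub hintx
  have hinttx : Integrable (fun x : ℝ => t/2 - x) μ := (integrable_const (t/2)).sub hintx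
  set J : ℝ := ∫ x in B, (1 - x) ∂μ with hJdef
  set d : ℝ := ∫ x in B, (t/2 - x) ∂μ with hddef
  have hd0 : 0 ≤ d := setIntegral_nonneg hBm (fun x hx => by simp only [hBdef, Set.mem_Iic] at hx; linarith)
  have hdJ : d = J - (1 - t/2) * r := by
    have h1' : ∫ x in B, (t/2 - x) ∂μ = ∫ x in B, ((1 - x) - (1 - t/2)) ∂μ := by
      congr 1; funext x; ring
    rw [hddef, h1', integral_sub hint1x.integrableOn (integrable_const _).integrableOn,
      setIntegral_const]
    simp [hJdef, hrdef, smul_eq_mul, mul_comm, Measure.real]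
  have hitot : ∫ x, (1 - x) ∂μ = 1 - m := by
    rw [integral_sub (integrable_const 1) hintx, integral_const, hmean]
    simp
  have h1xnn : 0 ≤ᵐ[μ] fun x : ℝ => 1 - x := by
    filter_upwards [hae] with x hx
    simp only [Pi.zero_apply]
    linarith [hx.2]
  have hJle : J ≤ 1 - m := by
    rw [hJdef, ← hitot]
    exact setIntegral_le_integral hint1x h1xnn
  have hJcompl : ∫ x in Bᶜ, (1 - x) ∂μ = (1 - m) - J := by
    have h := integral_add_compl hBm hint1x
    rw [hitot] at h
    linarith [h]
  have hJge : (1 - t/2) * r ≤ J := by linarith [hd0, hdJ]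
  -- slice bound
  have hslice : ∀ x : ℝ, x ∈ Set.Icc (0:ℝ) 1 → x ∉ B →
      μ (Set.Iic (t - x)) ≤ ENNReal.ofReal ((2*d + 2*r*(1-x))/(2-t)) := by
    intro x hx hxB
    have hxt : t/2 < x := by
      by_contra h
      exact hxB (by simpa [hBdef, Set.mem_Iic] using not_lt.1 h)
    set K : ℝ := (μ (Set.Iic (t-x))).toReal with hKdef
    have hKr : K ≤ r := ENNReal.toReal_mono (measure_ne_top _ _)
      (measure_mono (Set.Iic_subset_Iic.2 (by linarith)))
    have hK0 : 0 ≤ K := ENNReal.toReal_nonneg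
    have hsub : Set.Iic (t-x) ⊆ B := Set.Iic_subset_Iic.2 (by linarith)
    have hmono : ∫ y in Set.Iic (t-x), (t/2 - y) ∂μ ≤ d := by
      refine setIntegral_mono_set hinttx.integrableOn ?_ (HasSubset.Subset.eventuallyLE hsub)
      refine (ae_restrict_iff' hBm).2 (Filter.Eventually.of_forall fun y hy => ?_)
      simp only [hBdef, Set.mem_Iic] at hy
      simp only [Pi.zero_apply]; linarith
    have hconst : (x - t/2) * K ≤ ∫ y in Set.Iic (t-x), (t/2 - y) ∂μ := by
      refine (le_of_eq (by rw [smul_eq_mul, mul_comm]; rfl)).trans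
        (setIntegral_ge_of_const_le (c := x - t/2) measurableSet_Iic (measure_ne_top _ _)
        (fun y hy => ?_) hinttx.integrableOn)
      simp only [Set.mem_Iic] at hy; linarith
    have hKb : K ≤ (2*d + 2*r*(1-x))/(2-t) := by
      rw [le_div_iff₀ ht2]
      nlinarith [hx.2, hKr, hK0, hmono, hconst]
    calc μ (Set.Iic (t-x)) = ENNReal.ofReal K := (ENNReal.ofReal_toReal (measure_ne_top _ _)).symm
      _ ≤ _ := ENNReal.ofReal_le_ofReal hKb
  -- the generic lintegral bound over Bᶜ
  set W : ℝ := (2*d*(1-r) + 2*r*((1-m) - J))/(2-t) with hWdef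
  have hcomplB : μ Bᶜ = ENNReal.ofReal (1 - r) := by
    rw [prob_compl_eq_one_sub hBm, hrB, ← ENNReal.ofReal_one, ← ENNReal.ofReal_sub _ hr0]
  have hmJnn : 0 ≤ (1-m) - J := by
    rw [← hJcompl]
    exact integral_nonneg_of_ae (ae_restrict_of_ae h1xnn)
  have hW0 : 0 ≤ W := by
    apply div_nonneg _ (le_of_lt ht2)
    nlinarith [hd0, hr0, hr1, hmJnn]
  -- integral of the slice majorant over Bᶜ
  have hintmaj : Integrable (fun x : ℝ => (2*d + 2*r*(1-x))/(2-t)) μ := by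
    apply Integrable.div_const
    exact (integrable_const (2*d)).add (hint1x.const_mul (2*r))
  have hmajnn : 0 ≤ᵐ[μ] fun x : ℝ => (2*d + 2*r*(1-x))/(2-t) := by
    filter_upwards [hae] with x hx
    simp only [Pi.zero_apply]
    apply div_nonneg _ (le_of_lt ht2)
    nlinarith [hd0, hr0, hx.2]
  have hintW : ∫ x in Bᶜ, ((2*d + 2*r*(1-x))/(2-t)) ∂μ = W := by
    rw [integral_div]
    congr 1
    rw [integral_add (integrable_const _).integrableOn ((hint1x.const_mul (2*r)).integrableOn),
      setIntegral_const, integral_const_mul, measureReal_def, hJcompl, hcomplB]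
    rw [ENNReal.toReal_ofReal (by linarith)]
    simp only [smul_eq_mul]
    ring
  have hDgen : ∫⁻ x in Bᶜ, μ (Set.Iic (t-x)) ∂μ ≤ ENNReal.ofReal W := by
    have step1 : ∫⁻ x in Bᶜ, μ (Set.Iic (t-x)) ∂μ
        ≤ ∫⁻ x in Bᶜ, ENNReal.ofReal ((2*d + 2*r*(1-x))/(2-t)) ∂μ := by
      refine lintegral_mono_ae ?_
      rw [ae_restrict_iff' hBm.compl]
      filter_upwards [hae] with x hx hxB
      exact hslice x hx hxB
    have step2 : ∫⁻ x in Bᶜ, ENNReal.ofReal ((2*d + 2*r*(1-x))/(2-t)) ∂μ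
        = ENNReal.ofReal (∫ x in Bᶜ, ((2*d + 2*r*(1-x))/(2-t)) ∂μ) := by
      rw [ofReal_integral_eq_lintegral_ofReal hintmaj.integrableOn (ae_restrict_of_ae hmajnn)]
    rw [step2, hintW] at step1
    exact step1

  -- identify D via product measure
  set A1 : Set (ℝ × ℝ) := S ∩ (Bᶜ ×ˢ (Set.univ : Set ℝ)) with hA1def
  set A2 : Set (ℝ × ℝ) := S ∩ ((Set.univ : Set ℝ) ×ˢ Bᶜ) with hA2def
  have hA1m : MeasurableSet A1 := hSm.inter (hBm.compl.prod MeasurableSet.univ)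
  have hA2m : MeasurableSet A2 := hSm.inter (MeasurableSet.univ.prod hBm.compl)
  have hA1eq : (μ.prod μ) A1 = ∫⁻ x in Bᶜ, μ (Set.Iic (t-x)) ∂μ := by
    rw [Measure.prod_apply hA1m, ← lintegral_indicator hBm.compl]
    congr 1
    funext x
    by_cases hx : x ∈ Bᶜ
    · rw [Set.indicator_of_mem hx]
      congr 1
      ext y
      simp only [hA1def, hSdef, Set.mem_preimage, Set.mem_inter_iff, Set.mem_setOf_eq,
        Set.mem_prod, Set.mem_univ, and_true, Set.mem_Iic]
      constructor
      · rintro ⟨h, _⟩; linarith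
      · intro h; exact ⟨by linarith, hx⟩
    · rw [Set.indicator_of_notMem hx]
      have hemp : Prod.mk x ⁻¹' A1 = ∅ := by
        ext y
        simp only [hA1def, Set.mem_preimage, Set.mem_inter_iff, Set.mem_prod, Set.mem_univ,
          and_true, Set.mem_empty_iff_false, iff_false]
        rintro ⟨-, h⟩; exact hx h
      rw [hemp, measure_empty]
  have hA2eq : (μ.prod μ) A2 = ∫⁻ x in Bᶜ, μ (Set.Iic (t-x)) ∂μ := by
    rw [Measure.prod_apply_symm hA2m, ← lintegral_indicator hBm.compl]
    congr 1
    funext y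
    by_cases hy : y ∈ Bᶜ
    · rw [Set.indicator_of_mem hy]
      congr 1
      ext x
      simp only [hA2def, hSdef, Set.mem_preimage, Set.mem_inter_iff, Set.mem_setOf_eq,
        Set.mem_prod, Set.mem_univ, true_and, Set.mem_Iic]
      constructor
      · rintro ⟨h, _⟩; linarith
      · intro h; exact ⟨by linarith, hy⟩
    · rw [Set.indicator_of_notMem hy]
      have hemp : (fun x => (x, y)) ⁻¹' A2 = ∅ := by
        ext x
        simp only [hA2def, Set.mem_preimage, Set.mem_inter_iff, Set.mem_prod, Set.mem_univ,
          true_and, Set.mem_empty_iff_false, iff_false]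
        rintro ⟨-, h⟩; exact hy h
      rw [hemp, measure_empty]
  -- bound II
  have hBB : (μ.prod μ) (B ×ˢ B) = ENNReal.ofReal (r*r) := by
    rw [Measure.prod_prod, hrB, ← ENNReal.ofReal_mul hr0]
  have hcover : S ⊆ (B ×ˢ B) ∪ (A1 ∪ A2) := by
    rintro ⟨x, y⟩ hxy
    by_cases hx : x ∈ B
    · by_cases hy : y ∈ B
      · exact Or.inl ⟨hx, hy⟩
      · exact Or.inr (Or.inr ⟨hxy, Set.mem_univ x, hy⟩)
    · exact Or.inr (Or.inl ⟨hxy, hx, Set.mem_univ y⟩)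
  have hII : (μ.prod μ) S ≤ ENNReal.ofReal (r*r + 2*W) := by
    calc (μ.prod μ) S ≤ (μ.prod μ) ((B ×ˢ B) ∪ (A1 ∪ A2)) := measure_mono hcover
      _ ≤ (μ.prod μ) (B ×ˢ B) + ((μ.prod μ) A1 + (μ.prod μ) A2) :=
          le_trans (measure_union_le _ _) (by gcongr; exact measure_union_le _ _)
      _ ≤ ENNReal.ofReal (r*r) + (ENNReal.ofReal W + ENNReal.ofReal W) := by
          rw [hBB, hA1eq, hA2eq]; gcongr <;> exact hDgen
      _ = ENNReal.ofReal (r*r + 2*W) := by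
          rw [← ENNReal.ofReal_add hW0 hW0, ← ENNReal.ofReal_add (by positivity) (by linarith [hW0])]
          ring_nf
  -- bound I (union/complement)
  have hdisj : Disjoint S (Bᶜ ×ˢ Bᶜ) := by
    rw [Set.disjoint_left]
    rintro ⟨x, y⟩ hxy ⟨hx, hy⟩
    simp only [hSdef, Set.mem_setOf_eq] at hxy
    simp only [hBdef, Set.mem_compl_iff, Set.mem_Iic, not_le] at hx hy
    linarith
  have hI : (μ.prod μ) S ≤ ENNReal.ofReal (2*r - r*r) := by
    have hsum : (μ.prod μ) S + ENNReal.ofReal ((1-r)*(1-r)) ≤ 1 := by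
      have hBcBc : (μ.prod μ) (Bᶜ ×ˢ Bᶜ) = ENNReal.ofReal ((1-r)*(1-r)) := by
        rw [Measure.prod_prod, hcomplB, ← ENNReal.ofReal_mul (by linarith)]
      rw [← hBcBc, ← measure_union hdisj (hBm.compl.prod hBm.compl)]
      exact prob_le_one
    have h1r : ((1:ℝ) - r)*(1-r) ≤ 1 := by nlinarith
    have := tsub_le_tsub_right hsum (ENNReal.ofReal ((1-r)*(1-r)))
    rw [ENNReal.add_sub_cancel_right ENNReal.ofReal_ne_top] at this
    refine le_trans this ?_
    rw [← ENNReal.ofReal_one, ← ENNReal.ofReal_sub _ (by nlinarith)]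
    exact ENNReal.ofReal_le_ofReal (by nlinarith)
  -- final arithmetic
  have hhalf : (1:ℝ) - t/2 = (2-t)/2 := by ring
  have hJd : J = d + ((2-t)/2)*r := by rw [hdJ]; ring
  rcases le_or_gt (r*(2-t)) (1-m) with hc | hc
  · refine le_trans hI (ENNReal.ofReal_le_ofReal ?_)
    rw [le_div_iff₀ (by positivity)]
    rcases le_or_gt r (2/5) with h25 | h25
    · nlinarith [sq_nonneg (5*r-2), sq_nonneg (2-t), mul_nonneg hr0 ht2.le,
        sq_nonneg (2*(2-t)-5*(1-m)), mul_nonneg (mul_nonneg hr0 ht2.le) ht2.le,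
        sq_nonneg (r*(2-t)), mul_pos ht2 ht2]
    · nlinarith [mul_nonneg (sub_nonneg.2 hc) (by nlinarith : (0:ℝ) ≤ (1-m) + r*(2-t)),
        sq_nonneg (2-t), mul_pos ht2 ht2, sq_nonneg (r*(2-t))]
  · refine le_trans hII (ENNReal.ofReal_le_ofReal ?_)
    have key : (r*r)*(2-t)^2 + 2*(2-t)*(2*d*(1-r) + 2*r*((1-m) - J)) ≤ 4*(1-m)^2 := by
      have h2g : 0 ≤ 2*(1-m) - r*(2-t) := by nlinarith [hd0, hJle, hJd]
      rcases le_or_gt (1/2 : ℝ) r with hhalf2 | hhalf2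
      · nlinarith [mul_nonneg (mul_nonneg hd0 ht2.le) (by linarith : (0:ℝ) ≤ 2*r-1),
          sq_nonneg (2*(1-m) - r*(2-t)), hJd]
      · have hdub : d ≤ (1-m) - ((2-t)/2)*r := by linarith [hJd, hJle]
        nlinarith [mul_nonneg h2g (by nlinarith : (0:ℝ) ≤ 2*(1-m) + 3*(r*(2-t)) - 2*(2-t)),
          mul_nonneg (sub_nonneg.2 hdub) (mul_nonneg ht2.le (by linarith : (0:ℝ) ≤ 1 - 2*r)), hJd]
    have expand : r*r + 2*W = ((r*r)*(2-t)^2 + 2*(2-t)*(2*d*(1-r) + 2*r*((1-m) - J)))/(2-t)^2 := by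
      rw [hWdef]; field_simp
    rw [expand]
    exact div_le_div_of_nonneg_right key (by positivity) |>.trans_eq rfl
end

section
/- Let X₁, X₂ be i.i.d. random variables with values in [0,1] and common mean m. If 1 ≤ t < 2m and m ≥ (2t+1)/5, then P(X₁ + X₂ ≤ t) ≤ 2(1-m)/(2-t) - (1-m)²/(2-t)², which equals 1 - ((1+m-t)/(2-t))². -/
open MeasureTheory Set

lemma hs_scalar (ν q q' κ ρ D : ℝ)
    (h35 : 3/5 ≤ ν) (hν1 : ν ≤ 1)
    (hq0 : 0 ≤ q) (hq'0 : 0 ≤ q') (hsum : q + q' ≤ 1)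
    (hκq : κ ≤ q) (hρq' : ρ ≤ q') (hρ0 : 0 ≤ ρ)
    (hκρ : κ - ρ = 2*ν - 1)
    (hD1 : D ≤ q'*q) (hD2 : D ≤ q*q' + ρ*q - q'*κ) :
    ν^2 ≤ q^2 + 2*((1-q)*q - D) := by
  rcases le_or_gt ν q with hc | hc
  · nlinarith [mul_nonneg hq0 (by linarith : (0:ℝ) ≤ 1 - q - q'), sq_nonneg (q - ν)]
  · -- q < ν ; use hD2, κ = ρ + 2ν - 1
    have hκ : κ = ρ + 2*ν - 1 := by linarith
    have hq2ν : 2*ν - 1 ≤ q := by linarith [hρ0, hκq, hκ]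
    have hρub : ρ ≤ q - (2*ν - 1) := by linarith [hκq, hκ]
    rcases le_or_gt q q' with hqq | hqq
    · -- q' ≥ q
      nlinarith [mul_nonneg (by linarith : (0:ℝ) ≤ q' - q) hρ0,
        mul_nonneg (by linarith : (0:ℝ) ≤ q - (2*ν-1)) (by linarith : (0:ℝ) ≤ 1 - q - q'),
        sq_nonneg (q - (2*ν - 1)),
        mul_nonneg (by linarith : (0:ℝ) ≤ 5*ν - 3) (by linarith : (0:ℝ) ≤ 1 - ν)]
    · -- q' < q
      rcases le_or_gt q' (q - (2*ν - 1)) with hc2 | hc2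
      · nlinarith [mul_nonneg (by linarith : (0:ℝ) ≤ q - q') (by linarith : (0:ℝ) ≤ q' - ρ),
          mul_nonneg (by linarith : (0:ℝ) ≤ 3*q - ν) (by linarith : (0:ℝ) ≤ ν - q),
          mul_nonneg (by linarith : (0:ℝ) ≤ q - (2*ν-1) - q') (by linarith : (0:ℝ) ≤ q - q'),
          sq_nonneg (q' - (q - (2*ν-1)))]
      · nlinarith [mul_nonneg (by linarith : (0:ℝ) ≤ q - q') (by linarith : (0:ℝ) ≤ q - (2*ν-1) - ρ),
          mul_nonneg (by linarith : (0:ℝ) ≤ 3*q - ν) (by linarith : (0:ℝ) ≤ ν - q)]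

-- bounded measurable implies integrable on finite measure
lemma hs_integrable {α : Type*} [MeasurableSpace α] {μ : Measure α} [IsFiniteMeasure μ]
    {f : α → ℝ} (hf : Measurable f) (C : ℝ) (h : ∀ x, |f x| ≤ C) : Integrable f μ :=
  (integrable_const C).mono' hf.aestronglyMeasurable (Filter.Eventually.of_forall fun x => by
    simpa [Real.norm_eq_abs] using h x)

set_option maxHeartbeats 2000000 in
/-- Core lemma: `V` valued in `[0,1]`, mean `ν ≥ 3/5`; then
`(μ ⊗ μ) {V₁ + V₂ ≤ 1} ≤ 1 - ν²`. -/
lemma hs_core (μ : Measure ℝ) [IsProbabilityMeasure μ]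
    (V : ℝ → ℝ) (hV : Measurable V) (hV0 : ∀ x, 0 ≤ V x) (hV1 : ∀ x, V x ≤ 1)
    {ν : ℝ} (hνdef : ν = ∫ x, V x ∂μ) (hν35 : 3/5 ≤ ν) :
    (μ.prod μ) {p : ℝ × ℝ | V p.1 + V p.2 ≤ 1} ≤ ENNReal.ofReal (1 - ν^2) := by
  classical
  set π := μ.prod μ with hπ
  have : IsProbabilityMeasure π := by infer_instance
  -- basic sets
  set A : Set ℝ := {x | 1/2 < V x} with hAdef
  set B : Set ℝ := {x | V x < 1/2} with hBdef
  have hA : MeasurableSet A := measurableSet_lt measurable_const hV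
  have hB : MeasurableSet B := measurableSet_lt hV measurable_const
  set S : ℝ → ℝ := fun x => max (2 * V x - 1) 0 with hSdef
  set T : ℝ → ℝ := fun x => max (1 - 2 * V x) 0 with hTdef
  have hS : Measurable S := ((hV.const_mul 2).sub measurable_const).max measurable_const
  have hT : Measurable T := (measurable_const.sub (hV.const_mul 2)).max measurable_const
  have hSb : ∀ x, 0 ≤ S x ∧ S x ≤ 1 := fun x =>
    ⟨le_max_right _ _, max_le (by linarith [hV1 x]) one_pos.le⟩
  have hTb : ∀ x, 0 ≤ T x ∧ T x ≤ 1 := fun x =>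
    ⟨le_max_right _ _, max_le (by linarith [hV0 x]) one_pos.le⟩
  set q : ℝ := (μ A).toReal with hqdef
  set q' : ℝ := (μ B).toReal with hq'def
  set κ : ℝ := ∫ x, S x ∂μ with hκdef
  set ρ : ℝ := ∫ x, T x ∂μ with hρdef
  have hSint : Integrable S μ := hs_integrable hS 1 fun x => abs_le.2 ⟨by linarith [(hSb x).1], (hSb x).2⟩
  have hTint : Integrable T μ := hs_integrable hT 1 fun x => abs_le.2 ⟨by linarith [(hTb x).1], (hTb x).2⟩
  have hVint : Integrable V μ := hs_integrable hV 1 fun x => abs_le.2 ⟨by linarith [hV0 x], hV1 x⟩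
  have hindA : Integrable (A.indicator (1 : ℝ → ℝ)) μ := (integrable_const 1).indicator hA
  have hindB : Integrable (B.indicator (1 : ℝ → ℝ)) μ := (integrable_const 1).indicator hB
  have hintA : ∫ x, A.indicator (1 : ℝ → ℝ) x ∂μ = q := integral_indicator_one hA
  have hintB : ∫ x, B.indicator (1 : ℝ → ℝ) x ∂μ = q' := integral_indicator_one hB
  -- scalar facts
  have hq0 : 0 ≤ q := ENNReal.toReal_nonneg
  have hq'0 : 0 ≤ q' := ENNReal.toReal_nonneg
  have hsumqq' : q + q' ≤ 1 := by
    have hd : Disjoint A B := by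
      rw [Set.disjoint_left]; intro x hx hx'
      have h1 : 1/2 < V x := hx
      have h2 : V x < 1/2 := hx'
      linarith
    have h1 : μ A + μ B ≤ 1 := by
      rw [← measure_union hd hB]
      simpa using measure_mono (μ := μ) (Set.subset_univ (A ∪ B))
    have := ENNReal.toReal_mono (by simp) h1
    rwa [ENNReal.toReal_add (measure_ne_top μ A) (measure_ne_top μ B), ENNReal.toReal_one] at this
  have hκq : κ ≤ q := by
    rw [hκdef, ← hintA]
    refine integral_mono hSint hindA fun x => ?_
    by_cases hx : x ∈ A
    · simp only [Set.indicator_of_mem hx, Pi.one_apply]; exact (hSb x).2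
    · have : V x ≤ 1/2 := by simpa [hAdef, not_lt] using hx
      simp only [Set.indicator_of_notMem hx, hSdef]
      exact max_le (by linarith) le_rfl
  have hρq' : ρ ≤ q' := by
    rw [hρdef, ← hintB]
    refine integral_mono hTint hindB fun x => ?_
    by_cases hx : x ∈ B
    · simp only [Set.indicator_of_mem hx, Pi.one_apply]; exact (hTb x).2
    · have : 1/2 ≤ V x := by simpa [hBdef, not_lt] using hx
      simp only [Set.indicator_of_notMem hx, hTdef]
      exact max_le (by linarith) le_rfl
  have hρ0 : 0 ≤ ρ := integral_nonneg fun x => (hTb x).1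
  have hκρ : κ - ρ = 2*ν - 1 := by
    have h1 : ∀ x, S x - T x = 2 * V x - 1 := by
      intro x
      rcases le_total (2 * V x - 1) 0 with h | h
      · rw [hSdef, hTdef]; simp only
        rw [max_eq_right h, max_eq_left (by linarith)]; ring
      · rw [hSdef, hTdef]; simp only
        rw [max_eq_left h, max_eq_right (by linarith)]; ring
    have h2 : ∫ x, (S x - T x) ∂μ = κ - ρ := integral_sub hSint hTint
    have h3 : ∫ x, (2 * V x - 1) ∂μ = 2*ν - 1 := by
      rw [integral_sub ((hVint.const_mul 2)) (integrable_const 1), integral_const_mul 2 V, hνdef]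
      simp
    rw [← h3, ← h2]
    exact integral_congr_ae (Filter.Eventually.of_forall fun x => h1 x)
  have hν1 : ν ≤ 1 := by
    rw [hνdef]
    calc ∫ x, V x ∂μ ≤ ∫ _x, (1:ℝ) ∂μ := integral_mono hVint (integrable_const 1) hV1
    _ = 1 := by simp
  -- the events
  set E : Set (ℝ × ℝ) := {p : ℝ × ℝ | 1 < V p.1 + V p.2} with hEdef
  have hVfst : Measurable (fun p : ℝ × ℝ => V p.1) := hV.comp measurable_fst
  have hVsnd : Measurable (fun p : ℝ × ℝ => V p.2) := hV.comp measurable_snd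
  have hE : MeasurableSet E := measurableSet_lt measurable_const (hVfst.add hVsnd)
  set E12 : Set (ℝ × ℝ) := {p : ℝ × ℝ | V p.1 ≤ 1/2 ∧ 1/2 < V p.2 ∧ 1 < V p.1 + V p.2} with hE12def
  set E21 : Set (ℝ × ℝ) := {p : ℝ × ℝ | V p.2 ≤ 1/2 ∧ 1/2 < V p.1 ∧ 1 < V p.1 + V p.2} with hE21def
  set K : Set (ℝ × ℝ) := {p : ℝ × ℝ | V p.1 ≤ 1/2 ∧ 1/2 < V p.2 ∧ V p.1 + V p.2 ≤ 1} with hKdef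
  have hE12 : MeasurableSet E12 :=
    ((measurableSet_le hVfst measurable_const).inter
      ((measurableSet_lt measurable_const hVsnd).inter
        (measurableSet_lt measurable_const (hVfst.add hVsnd))))
  have hE21 : MeasurableSet E21 :=
    ((measurableSet_le hVsnd measurable_const).inter
      ((measurableSet_lt measurable_const hVfst).inter
        (measurableSet_lt measurable_const (hVfst.add hVsnd))))
  have hK : MeasurableSet K :=
    ((measurableSet_le hVfst measurable_const).inter
      ((measurableSet_lt measurable_const hVsnd).inter
        (measurableSet_le (hVfst.add hVsnd) measurable_const)))
  -- decomposition of E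
  have hABsub : (A ×ˢ A) ⊆ E := by
    rintro ⟨x, y⟩ ⟨hx, hy⟩
    have h1 : 1/2 < V x := hx
    have h2 : 1/2 < V y := hy
    show 1 < V x + V y
    linarith
  have hsub : ((A ×ˢ A) ∪ E12) ∪ E21 ⊆ E := by
    refine Set.union_subset (Set.union_subset hABsub ?_) ?_
    · rintro ⟨x, y⟩ hxy; exact hxy.2.2
    · rintro ⟨x, y⟩ hxy; exact hxy.2.2
  have hd1 : Disjoint (A ×ˢ A) E12 := by
    rw [Set.disjoint_left]
    rintro ⟨x, y⟩ ⟨hx, _⟩ hxy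
    have h1 : 1/2 < V x := hx
    have h2 : V x ≤ 1/2 := hxy.1
    linarith
  have hd2 : Disjoint ((A ×ˢ A) ∪ E12) E21 := by
    rw [Set.disjoint_left]
    rintro ⟨x, y⟩ hin hxy
    have h2 : V y ≤ 1/2 := hxy.1
    rcases hin with h | h
    · have h1 : 1/2 < V y := h.2
      linarith
    · have h1 : 1/2 < V y := h.2.1
      linarith
  have hmeasE : π (A ×ˢ A) + π E12 + π E21 ≤ π E := by
    rw [← measure_union hd1 hE12, ← measure_union hd2 hE21]
    exact measure_mono hsub
  -- swap symmetry
  have hswap : π E21 = π E12 := by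
    have h1 : E21 = Prod.swap ⁻¹' E12 := by
      ext ⟨x, y⟩
      simp only [hE21def, hE12def, Set.mem_preimage, Prod.swap_prod_mk, Set.mem_setOf_eq]
      constructor
      · rintro ⟨a, b, c⟩; exact ⟨a, b, by linarith⟩
      · rintro ⟨a, b, c⟩; exact ⟨a, b, by linarith⟩
    rw [h1, ← Measure.map_apply measurable_swap hE12, hπ, Measure.prod_swap]
  -- E12 + K = Aᶜ × A
  have hsplit : π E12 + π K = μ Aᶜ * μ A := by
    rw [← Measure.prod_prod, ← measure_union ?_ hK]
    · congr 1
      ext ⟨x, y⟩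
      simp only [hE12def, hKdef, Set.mem_union, Set.mem_setOf_eq, Set.mem_prod, Set.mem_compl_iff,
        hAdef, not_lt]
      constructor
      · rintro (⟨a, b, c⟩ | ⟨a, b, c⟩)
        · exact ⟨a, b⟩
        · exact ⟨a, b⟩
      · rintro ⟨a, b⟩
        rcases le_or_gt (V x + V y) 1 with h | h
        · exact Or.inr ⟨a, b, h⟩
        · exact Or.inl ⟨a, b, h⟩
    · rw [Set.disjoint_left]
      rintro ⟨x, y⟩ hxy hxy'
      have h1 : 1 < V x + V y := hxy.2.2
      have h2 : V x + V y ≤ 1 := hxy'.2.2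
      linarith
  -- real versions
  set pE : ℝ := (π E).toReal with hpEdef
  set e12 : ℝ := (π E12).toReal with he12def
  set kK : ℝ := (π K).toReal with hkKdef
  have hcomplA : (μ Aᶜ).toReal = 1 - q := by
    rw [prob_compl_eq_one_sub hA, ENNReal.toReal_sub_of_le prob_le_one ENNReal.one_ne_top]
    simp [hqdef]
  have he12 : e12 = (1 - q) * q - kK := by
    have := congrArg ENNReal.toReal hsplit
    rw [ENNReal.toReal_add (measure_ne_top π E12) (measure_ne_top π K), ENNReal.toReal_mul,
      hcomplA] at this
    rw [he12def, hkKdef]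
    linarith [this]
  have hpElb : q * q + 2 * e12 ≤ pE := by
    have h1 := ENNReal.toReal_mono (measure_ne_top π E) hmeasE
    rw [ENNReal.toReal_add (by finiteness) (measure_ne_top π E21),
      ENNReal.toReal_add (measure_ne_top π (A ×ˢ A)) (measure_ne_top π E12), hswap,
      Measure.prod_prod, ENNReal.toReal_mul] at h1
    rw [hpEdef, he12def]
    linarith [h1]
  -- bound 1 : kK ≤ q' * q
  have hKsub : K ⊆ B ×ˢ A := by
    rintro ⟨x, y⟩ ⟨h1, h2, h3⟩
    refine ⟨?_, h2⟩
    show V x < 1/2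
    linarith
  have hD1 : kK ≤ q' * q := by
    have := ENNReal.toReal_mono (by finiteness) (measure_mono (μ := π) hKsub)
    rwa [Measure.prod_prod, ENNReal.toReal_mul] at this
  -- bound 2 : kK ≤ q*q' + ρ*q - q'*κ  via pointwise kernel bound
  set k : ℝ × ℝ → ℝ := fun p =>
    B.indicator 1 p.1 * A.indicator 1 p.2 + T p.1 * A.indicator 1 p.2
      - B.indicator 1 p.1 * S p.2 with hkdef
  have hptwise : ∀ p : ℝ × ℝ, K.indicator (1 : ℝ × ℝ → ℝ) p ≤ k p := by
    rintro ⟨x, y⟩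
    by_cases hy : y ∈ A
    · have hy' : 1/2 < V y := hy
      have hSy : S y = 2 * V y - 1 := max_eq_left (by linarith)
      by_cases hx : x ∈ B
      · have hx' : V x < 1/2 := hx
        have hTx : T x = 1 - 2 * V x := max_eq_left (by linarith)
        have hkval : k (x, y) = 1 + (1 - 2 * V x) - (2 * V y - 1) := by
          simp [hkdef, Set.indicator_of_mem hx, Set.indicator_of_mem hy, hTx, hSy]
        by_cases hK' : (x, y) ∈ K
        · have hsum : V x + V y ≤ 1 := hK'.2.2
          rw [Set.indicator_of_mem hK', hkval]
          simp only [Pi.one_apply]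
          linarith
        · rw [Set.indicator_of_notMem hK', hkval]
          linarith [hV1 y, hV0 x]
      · have hx' : 1/2 ≤ V x := by simpa [hBdef, not_lt] using hx
        have hK' : (x, y) ∉ K := by
          rintro ⟨h1, h2, h3⟩
          linarith
        rw [Set.indicator_of_notMem hK']
        have : k (x, y) = T x := by
          simp [hkdef, Set.indicator_of_notMem hx, Set.indicator_of_mem hy]
        rw [this]
        exact (hTb x).1
    · have hy' : V y ≤ 1/2 := by simpa [hAdef, not_lt] using hy
      have hSy : S y = 0 := max_eq_right (by linarith)
      have hK' : (x, y) ∉ K := by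
        rintro ⟨h1, h2, h3⟩
        exact hy h2
      rw [Set.indicator_of_notMem hK']
      have : k (x, y) = 0 := by
        simp [hkdef, Set.indicator_of_notMem hy, hSy]
      rw [this]
  have hkint1 : Integrable (fun p : ℝ × ℝ => B.indicator (1:ℝ→ℝ) p.1 * A.indicator (1:ℝ→ℝ) p.2) π :=
    hindB.mul_prod hindA
  have hkint2 : Integrable (fun p : ℝ × ℝ => T p.1 * A.indicator (1:ℝ→ℝ) p.2) π :=
    hTint.mul_prod hindA
  have hkint3 : Integrable (fun p : ℝ × ℝ => B.indicator (1:ℝ→ℝ) p.1 * S p.2) π :=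
    hindB.mul_prod hSint
  have hkint : Integrable k π := (hkint1.add hkint2).sub hkint3
  have hKind : Integrable (K.indicator (1 : ℝ × ℝ → ℝ)) π := (integrable_const 1).indicator hK
  have hD2 : kK ≤ q * q' + ρ * q - q' * κ := by
    have h1 : kK = ∫ p, K.indicator (1 : ℝ × ℝ → ℝ) p ∂π := (integral_indicator_one hK).symm
    have h2 : ∫ p, K.indicator (1 : ℝ × ℝ → ℝ) p ∂π ≤ ∫ p, k p ∂π :=
      integral_mono hKind hkint hptwise
    have hsum_int : Integrable (fun p : ℝ × ℝ =>
        B.indicator (1:ℝ→ℝ) p.1 * A.indicator (1:ℝ→ℝ) p.2 + T p.1 * A.indicator (1:ℝ→ℝ) p.2) π :=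
      hkint1.add hkint2
    have h3 : ∫ p, k p ∂π = q' * q + ρ * q - q' * κ := by
      rw [hkdef]
      rw [integral_sub hsum_int hkint3, integral_add hkint1 hkint2,
        integral_prod_mul, integral_prod_mul, integral_prod_mul, hintA, hintB]
    rw [h1]
    calc ∫ p, K.indicator (1 : ℝ × ℝ → ℝ) p ∂π ≤ q' * q + ρ * q - q' * κ := h3 ▸ h2
    _ = q * q' + ρ * q - q' * κ := by ring
  -- core scalar inequality
  have hcore : ν^2 ≤ pE := by
    have := hs_scalar ν q q' κ ρ kK hν35 hν1 hq0 hq'0 hsumqq' hκq hρq' hρ0 (by linarith [hκρ]) hD1 hD2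
    nlinarith [this, hpElb, he12]
  -- conclusion
  have hEc : {p : ℝ × ℝ | V p.1 + V p.2 ≤ 1} = Eᶜ := by
    ext p
    simp [hEdef, not_lt]
  rw [hEc, prob_compl_eq_one_sub hE]
  have hπE : ENNReal.ofReal (ν^2) ≤ π E := by
    rw [← ENNReal.ofReal_toReal (measure_ne_top π E)]
    exact ENNReal.ofReal_le_ofReal hcore
  refine tsub_le_iff_right.mpr ?_
  have h1 : (1:ENNReal) = ENNReal.ofReal (1 - ν^2) + ENNReal.ofReal (ν^2) := by
    rw [← ENNReal.ofReal_add (by nlinarith) (by positivity)]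
    norm_num
  rw [h1]
  exact add_le_add_right hπE _

open MeasureTheory

/-- Hoeffding–Shrikande bound (third case) for the sum of two i.i.d. random variables
on `[0,1]` with mean `m`: if `1 ≤ t < 2m` and `m ≥ (2t+1)/5` then
`P(X₁ + X₂ ≤ t) ≤ 2(1-m)/(2-t) - (1-m)²/(2-t)²`, which equals `1 - ((1+m-t)/(2-t))²`. -/
theorem stmt_3 (μ : Measure ℝ) [IsProbabilityMeasure μ]
    (hsupp : μ (Set.Icc (0:ℝ) 1)ᶜ = 0)
    (m t : ℝ) (hm0 : 0 < m) (hm1 : m < 1)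
    (hmean : ∫ x, x ∂μ = m) (ht1 : 1 ≤ t) (ht : t < 2 * m)
    (h2 : (2 * t + 1) / 5 ≤ m) :
    (μ.prod μ) {p : ℝ × ℝ | p.1 + p.2 ≤ t}
      ≤ ENNReal.ofReal (2 * (1 - m) / (2 - t) - (1 - m) ^ 2 / (2 - t) ^ 2) ∧
    2 * (1 - m) / (2 - t) - (1 - m) ^ 2 / (2 - t) ^ 2
      = 1 - ((1 + m - t) / (2 - t)) ^ 2 := by
  have hτ : 0 < 2 - t := by linarith
  have hτ' : (2 - t) ≠ 0 := ne_of_gt hτ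
  have heq : 2 * (1 - m) / (2 - t) - (1 - m) ^ 2 / (2 - t) ^ 2
      = 1 - ((1 + m - t) / (2 - t)) ^ 2 := by
    field_simp
    ring
  refine ⟨?_, heq⟩
  -- the clipped variable
  set V : ℝ → ℝ := fun x => max 0 (min 1 ((x - (t - 1)) / (2 - t))) with hVdef
  have hVmeas : Measurable V := by
    have : Continuous V := by
      apply continuous_const.max
      exact continuous_const.min (((continuous_id.sub continuous_const).div_const _))
    exact this.measurable
  have hV0 : ∀ x, 0 ≤ V x := fun x => le_max_left _ _
  have hV1 : ∀ x, V x ≤ 1 := fun x => max_le one_pos.le (min_le_left _ _)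
  -- mean bound
  have hae : ∀ᵐ x ∂μ, x ∈ Set.Icc (0:ℝ) 1 := by
    rw [MeasureTheory.ae_iff]
    convert hsupp using 2; rfl
  have hid_int : Integrable (fun x : ℝ => x) μ := by
    refine (integrable_const 1).mono' measurable_id.aestronglyMeasurable ?_
    filter_upwards [hae] with x hx
    rw [Real.norm_eq_abs, abs_le]
    exact ⟨by linarith [hx.1], hx.2⟩
  have hVint : Integrable V μ :=
    hs_integrable hVmeas 1 fun x => abs_le.2 ⟨by linarith [hV0 x], hV1 x⟩
  have hlin_int : Integrable (fun x : ℝ => (x - (t - 1)) / (2 - t)) μ := by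
    have : (fun x : ℝ => (x - (t - 1)) / (2 - t)) = fun x : ℝ => (2 - t)⁻¹ * (x - (t - 1)) := by
      ext x; rw [div_eq_inv_mul]
    rw [this]
    exact (hid_int.sub (integrable_const (t - 1))).const_mul _
  have hlin_val : ∫ x, (x - (t - 1)) / (2 - t) ∂μ = (m - (t - 1)) / (2 - t) := by
    have h1 : ∫ x, (x - (t - 1)) / (2 - t) ∂μ = (2 - t)⁻¹ * ∫ x, (x - (t - 1)) ∂μ := by
      rw [← integral_const_mul]
      congr 1; ext x; rw [div_eq_inv_mul]
    rw [h1, integral_sub hid_int (integrable_const (t - 1)), hmean]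
    simp [div_eq_inv_mul]
  set ν : ℝ := ∫ x, V x ∂μ with hνdef
  have hνlb : (m - (t - 1)) / (2 - t) ≤ ν := by
    rw [hνdef, ← hlin_val]
    refine integral_mono_ae hlin_int hVint ?_
    filter_upwards [hae] with x hx
    have hle1 : (x - (t - 1)) / (2 - t) ≤ 1 := by
      rw [div_le_one hτ]
      linarith [hx.2]
    calc (x - (t - 1)) / (2 - t) = min 1 ((x - (t - 1)) / (2 - t)) := (min_eq_right hle1).symm
    _ ≤ V x := le_max_right _ _
  have hν0lb : (3:ℝ)/5 ≤ (m - (t - 1)) / (2 - t) := by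
    rw [le_div_iff₀ hτ]
    linarith [h2, (by linarith : 2 * t + 1 ≤ 5 * m)]
  have hν35 : (3:ℝ)/5 ≤ ν := le_trans hν0lb hνlb
  -- event inclusion
  have hincl : {p : ℝ × ℝ | p.1 + p.2 ≤ t} ⊆ {p : ℝ × ℝ | V p.1 + V p.2 ≤ 1} := by
    rintro ⟨x, y⟩ hxy
    have hxy' : x + y ≤ t := hxy
    show V x + V y ≤ 1
    rcases le_or_gt x (t - 1) with hx | hx
    · have hVx : V x = 0 := by
        rw [hVdef]
        simp only
        rw [max_eq_left]
        exact le_trans (min_le_right _ _) (by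
          apply div_nonpos_of_nonpos_of_nonneg <;> linarith)
      rw [hVx]
      linarith [hV1 y]
    · rcases le_or_gt y (t - 1) with hy | hy
      · have hVy : V y = 0 := by
          rw [hVdef]
          simp only
          rw [max_eq_left]
          exact le_trans (min_le_right _ _) (by
            apply div_nonpos_of_nonpos_of_nonneg <;> linarith)
        rw [hVy]
        linarith [hV1 x]
      · have hVx : V x ≤ (x - (t - 1)) / (2 - t) := by
          apply max_le (div_nonneg (by linarith) hτ.le) (min_le_right _ _)
        have hVy : V y ≤ (y - (t - 1)) / (2 - t) := by
          apply max_le (div_nonneg (by linarith) hτ.le) (min_le_right _ _)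
        have : (x - (t - 1)) / (2 - t) + (y - (t - 1)) / (2 - t) ≤ 1 := by
          rw [← add_div, div_le_one hτ]
          linarith
        linarith
  -- assemble
  calc (μ.prod μ) {p : ℝ × ℝ | p.1 + p.2 ≤ t}
      ≤ (μ.prod μ) {p : ℝ × ℝ | V p.1 + V p.2 ≤ 1} := measure_mono hincl
    _ ≤ ENNReal.ofReal (1 - ν^2) := hs_core μ V hVmeas hV0 hV1 hνdef hν35
    _ ≤ ENNReal.ofReal (2 * (1 - m) / (2 - t) - (1 - m) ^ 2 / (2 - t) ^ 2) := by
        apply ENNReal.ofReal_le_ofReal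
        rw [heq]
        have hν0' : (0:ℝ) ≤ (m - (t - 1)) / (2 - t) := le_trans (by norm_num) hν0lb
        have hsq : ((1 + m - t) / (2 - t))^2 ≤ ν^2 := by
          have h1 : (1 + m - t) / (2 - t) = (m - (t - 1)) / (2 - t) := by ring_nf
          rw [h1]
          exact pow_le_pow_left₀ hν0' hνlb 2
        linarith
end

section
/- For fixed n and t, the function m ↦ p(m,t) = sup over probability measures μ on [0,1] with mean m of P_μ(S_n ≤ t) is non-increasing in m on (0,1). -/
open MeasureTheory

/-- `p n m t = sup_{μ ∈ D_m} P_μ(S_n ≤ t)`, the supremum over Borel probability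
measures on `[0,1]` with mean `m` of the probability that the sum of `n` i.i.d.
random variables with law `μ` is at most `t`. -/
noncomputable def pSup (n : ℕ) (m t : ℝ) : ENNReal :=
  ⨆ (μ : Measure ℝ) (_ : IsProbabilityMeasure μ ∧ μ (Set.Icc (0:ℝ) 1)ᶜ = 0 ∧
      (∫ x, x ∂μ) = m),
    Measure.pi (fun _ : Fin n => μ) {x | ∑ i, x i ≤ t}

/-- For fixed `n` and `t`, the supremum `p(m,t)` is non-increasing in `m` on `(0,1)`. -/
theorem stmt_4 (n : ℕ) (t : ℝ) (m₁ m₂ : ℝ)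
    (h₁ : 0 < m₁) (h₂ : m₁ < 1) (h₃ : 0 < m₂) (h₄ : m₂ < 1) (h : m₁ ≤ m₂) :
    pSup n m₂ t ≤ pSup n m₁ t := by
  apply iSup₂_le
  intro μ hμ
  obtain ⟨hprob, hsupp, hmean⟩ := hμ
  haveI := hprob
  set c : ℝ := m₁ / m₂ with hc
  have hc0 : 0 < c := div_pos h₁ h₃
  have hc1 : c ≤ 1 := (div_le_one h₃).mpr h
  have hfm : Measurable (fun x : ℝ => c * x) := measurable_id.const_mul c
  set ν : Measure ℝ := μ.map (fun x : ℝ => c * x) with hν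
  haveI hνp : IsProbabilityMeasure ν := Measure.isProbabilityMeasure_map hfm.aemeasurable
  refine le_iSup₂_of_le ν ⟨hνp, ?_, ?_⟩ ?_
  · rw [hν, Measure.map_apply hfm measurableSet_Icc.compl]
    refine measure_mono_null ?_ hsupp
    intro x hx
    simp only [Set.mem_compl_iff, Set.mem_Icc, Set.mem_preimage] at hx ⊢
    intro ⟨h0, hx1⟩
    refine hx ⟨mul_nonneg hc0.le h0, ?_⟩
    nlinarith
  · have hg : AEStronglyMeasurable (fun x : ℝ => x) (μ.map fun x : ℝ => c * x) :=
      aestronglyMeasurable_id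
    rw [hν, integral_map hfm.aemeasurable hg, integral_const_mul, hmean, hc,
      div_mul_cancel₀ m₁ h₃.ne']
  · have hmp : MeasurePreserving (fun x : Fin n → ℝ => fun i => c * x i)
        (Measure.pi fun _ : Fin n => μ) (Measure.pi fun _ : Fin n => ν) :=
      measurePreserving_pi _ _ (fun _ => ⟨hfm, rfl⟩)
    have hset : MeasurableSet {x : Fin n → ℝ | ∑ i, x i ≤ t} :=
      measurableSet_le (Finset.measurable_sum Finset.univ fun i _ => measurable_pi_apply i)
        measurable_const
    rw [← hmp.map_eq, Measure.map_apply hmp.measurable hset]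
    have hae : ∀ᵐ x ∂(Measure.pi fun _ : Fin n => μ), ∀ i, 0 ≤ x i := by
      rw [MeasureTheory.ae_all_iff]
      intro i
      have hz : (Measure.pi fun _ : Fin n => μ)
          (Function.eval i ⁻¹' (Set.Icc (0:ℝ) 1)ᶜ) = 0 :=
        Measure.pi_eval_preimage_null _ hsupp
      rw [MeasureTheory.ae_iff]
      refine measure_mono_null ?_ hz
      intro x hx
      simp only [Set.mem_setOf_eq, not_le] at hx
      simp only [Set.mem_preimage, Set.mem_compl_iff, Set.mem_Icc, Function.eval]
      intro ⟨ha, _⟩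
      linarith
    refine measure_mono_ae ?_
    filter_upwards [hae] with x hx hxt
    have hxt' : ∑ i, x i ≤ t := hxt
    show ∑ i, c * x i ≤ t
    calc ∑ i, c * x i ≤ ∑ i, x i :=
          Finset.sum_le_sum fun i _ => mul_le_of_le_one_left (hx i) hc1
      _ ≤ t := hxt'
end

section
/- Suppose μ is a probability measure on [0,1] with mean m whose support is contained in [a,b] with 0 < a and b < 1. Then there exists α > 1 and a probability measure μ* on [0,1] with mean m (the pushforward of μ under x ↦ m + α(x-m)) such that for all t < mn, P_{μ*}(S_n ≤ t) ≥ P_μ(S_n ≤ t). Consequently, the supremum p(m,t) is attained by a measure whose support contains 0 or 1. -/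
open MeasureTheory

/-- The (topological) support of a measure: points all of whose neighborhoods
have positive measure. -/
def measSupport (μ : Measure ℝ) : Set ℝ := {x | ∀ U ∈ nhds x, μ U ≠ 0}

set_option maxHeartbeats 1000000
open Set Filter Topology



noncomputable section Aux

/-- The value functional. -/
def Vval (n : ℕ) (t : ℝ) (ρ : Measure ℝ) : ENNReal :=
  Measure.pi (fun _ : Fin n => ρ) {x | ∑ i, x i ≤ t}

lemma measurableSet_sumle (n : ℕ) (t : ℝ) :
    MeasurableSet {x : Fin n → ℝ | ∑ i, x i ≤ t} := by
  apply measurableSet_le (Finset.measurable_sum _ (fun i _ => measurable_pi_apply i))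
    measurable_const

lemma ae_mem_Icc {ρ : Measure ℝ} {a b : ℝ} (h : ρ (Set.Icc a b)ᶜ = 0) :
    ∀ᵐ x ∂ρ, x ∈ Set.Icc a b := by
  rw [MeasureTheory.ae_iff]
  exact h

lemma integrable_of_supp {ρ : Measure ℝ} [IsProbabilityMeasure ρ] {a b : ℝ}
    (h : ρ (Set.Icc a b)ᶜ = 0) : Integrable (fun x : ℝ => x) ρ := by
  refine (integrable_const (max |a| |b|)).mono' measurable_id.aestronglyMeasurable ?_
  filter_upwards [ae_mem_Icc h] with x hx
  rw [Real.norm_eq_abs]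
  exact abs_le_max_abs_abs hx.1 hx.2

lemma mean_mem_Icc {ρ : Measure ℝ} [IsProbabilityMeasure ρ] {a b m : ℝ}
    (h : ρ (Set.Icc a b)ᶜ = 0) (hm : (∫ x, x ∂ρ) = m) : m ∈ Set.Icc a b := by
  have hint := integrable_of_supp h
  have hae := ae_mem_Icc h
  constructor
  · have : (∫ _x, a ∂ρ) ≤ ∫ x, x ∂ρ := by
      refine integral_mono_ae (integrable_const a) hint ?_
      filter_upwards [hae] with x hx using hx.1
    simpa [hm] using this
  · have : (∫ x, x ∂ρ) ≤ ∫ _x, b ∂ρ := by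
      refine integral_mono_ae hint (integrable_const b) ?_
      filter_upwards [hae] with x hx using hx.2
    simpa [hm] using this

section Stretch

variable {ρ : Measure ℝ} [IsProbabilityMeasure ρ] {a b m α : ℝ}

lemma f_meas : Measurable (fun x : ℝ => m + α * (x - m)) := by fun_prop

lemma stretch_prob : IsProbabilityMeasure (ρ.map (fun x => m + α * (x - m))) :=
  Measure.isProbabilityMeasure_map f_meas.aemeasurable

lemma stretch_supp (hsupp : ρ (Set.Icc a b)ᶜ = 0)
    (hrange : ∀ x ∈ Set.Icc a b, m + α * (x - m) ∈ Set.Icc (0:ℝ) 1) :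
    (ρ.map (fun x => m + α * (x - m))) (Set.Icc (0:ℝ) 1)ᶜ = 0 := by
  rw [Measure.map_apply f_meas measurableSet_Icc.compl]
  refine measure_mono_null ?_ hsupp
  intro x hx
  simp only [mem_compl_iff, mem_preimage] at hx ⊢
  exact fun hmem => hx (hrange x hmem)

lemma stretch_mean (hsupp : ρ (Set.Icc a b)ᶜ = 0) (hmean : (∫ x, x ∂ρ) = m) :
    (∫ x, x ∂(ρ.map (fun x => m + α * (x - m)))) = m := by
  rw [integral_map (f := fun x : ℝ => x) f_meas.aemeasurable
    measurable_id.aestronglyMeasurable]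
  have hint := integrable_of_supp hsupp
  have h2 : (∫ x, (m + α * (x - m)) ∂ρ) = m + α * ((∫ x, x ∂ρ) - m) := by
    have i0 : Integrable (fun x : ℝ => x - m) ρ := by
      exact hint.sub (integrable_const m)
    have i1 : Integrable (fun x : ℝ => α * (x - m)) ρ := i0.const_mul α
    rw [integral_add (integrable_const m) i1, integral_const, integral_const_mul,
      integral_sub hint (integrable_const m), integral_const]
    simp
  rw [h2, hmean]; ring

lemma stretch_V (n : ℕ) (t : ℝ) (hα : 1 ≤ α) (ht : t < m * n) :
    Vval n t ρ ≤ Vval n t (ρ.map (fun x => m + α * (x - m))) := by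
  have hmp : MeasurePreserving (fun x : ℝ => m + α * (x - m)) ρ
      (ρ.map (fun x => m + α * (x - m))) := ⟨f_meas, rfl⟩
  have hpi := measurePreserving_pi (fun _ : Fin n => ρ)
    (fun _ : Fin n => ρ.map (fun x => m + α * (x - m))) (fun _ => hmp)
  unfold Vval
  rw [← hpi.measure_preimage (measurableSet_sumle n t).nullMeasurableSet]
  refine measure_mono ?_
  intro x hx
  simp only [mem_setOf_eq, mem_preimage] at hx ⊢
  have key : ∑ i, (m + α * (x i - m)) = n * m + α * ((∑ i, x i) - n * m) := by
    rw [Finset.sum_add_distrib, ← Finset.mul_sum, Finset.sum_sub_distrib]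
    simp only [Finset.sum_const, Finset.card_univ, Fintype.card_fin, nsmul_eq_mul,
      smul_eq_mul]
    try ring
  rw [key]
  have h1 : (∑ i, x i) - n * m ≤ 0 := by
    have : (m * n) ≤ n * m := le_of_eq (mul_comm m n)
    nlinarith [hx, ht]
  calc n * m + α * ((∑ i, x i) - n * m) ≤ n * m + 1 * ((∑ i, x i) - n * m) := by
        have := mul_le_mul_of_nonpos_right hα h1
        linarith
    _ = ∑ i, x i := by ring
    _ ≤ t := hx

end Stretch



section Supp
variable {ν : Measure ℝ}

lemma measSupport_compl_null (ν : Measure ℝ) : ν (measSupport ν)ᶜ = 0 := by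
  set T : Set (ℚ × ℚ) := {pq | ν (Ioo (pq.1 : ℝ) pq.2) = 0} with hT
  have hsub : (measSupport ν)ᶜ ⊆ ⋃ pq ∈ T, Ioo (pq.1 : ℝ) pq.2 := by
    intro x hx
    simp only [measSupport, mem_compl_iff, mem_setOf_eq, not_forall] at hx
    obtain ⟨U, hU, hU0⟩ := hx
    push_neg at hU0
    obtain ⟨ε, hε, hball⟩ := Metric.mem_nhds_iff.mp hU
    obtain ⟨p, hp1, hp2⟩ := exists_rat_btwn (show x - ε < x by linarith)
    obtain ⟨q, hq1, hq2⟩ := exists_rat_btwn (show x < x + ε by linarith)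
    have hIoo : Ioo (p:ℝ) q ⊆ U := by
      refine subset_trans ?_ hball
      intro y hy
      rw [Metric.mem_ball, Real.dist_eq, abs_lt]
      constructor <;> [linarith [hy.1]; linarith [hy.2]]
    have : (p, q) ∈ T := by
      rw [hT, mem_setOf_eq]
      exact measure_mono_null hIoo hU0
    exact mem_biUnion this ⟨hp2, hq1⟩
  refine measure_mono_null hsub ?_
  rw [measure_biUnion_null_iff (Set.to_countable T)]
  exact fun pq hpq => hpq

lemma measSupport_nonempty [IsProbabilityMeasure ν] : (measSupport ν).Nonempty := by
  by_contra h
  rw [Set.not_nonempty_iff_eq_empty] at h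
  have := measSupport_compl_null ν
  rw [h, Set.compl_empty] at this
  simp at this

lemma measSupport_subset_Icc (h : ν (Set.Icc (0:ℝ) 1)ᶜ = 0) :
    measSupport ν ⊆ Set.Icc 0 1 := by
  intro x hx
  by_contra hmem
  exact hx (Set.Icc 0 1)ᶜ (isClosed_Icc.isOpen_compl.mem_nhds hmem) h

lemma isClosed_measSupport (ν : Measure ℝ) : IsClosed (measSupport ν) := by
  rw [← isOpen_compl_iff, isOpen_iff_mem_nhds]
  intro x hx
  simp only [measSupport, mem_compl_iff, mem_setOf_eq, not_forall] at hx
  obtain ⟨U, hU, hU0⟩ := hx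
  push_neg at hU0
  filter_upwards [interior_mem_nhds.mpr hU] with y hy
  simp only [measSupport, mem_compl_iff, mem_setOf_eq, not_forall]
  exact ⟨U, mem_nhds_iff.mpr ⟨interior U, interior_subset, isOpen_interior, hy⟩, by simpa⟩

lemma mem_measSupport_map {f : ℝ → ℝ} (hfc : Continuous f) {y : ℝ}
    (hy : y ∈ measSupport ν) : f y ∈ measSupport (ν.map f) := by
  intro U hU
  obtain ⟨V, hVU, hVopen, hVy⟩ := mem_nhds_iff.mp hU
  have h1 : ν.map f V ≠ 0 := by
    rw [Measure.map_apply hfc.measurable hVopen.measurableSet]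
    exact hy _ (hfc.continuousAt.preimage_mem_nhds (hVopen.mem_nhds hVy))
  intro hU0
  exact h1 (measure_mono_null hVU hU0)

end Supp

section Bern

lemma pSup_eq (n : ℕ) (m t : ℝ) :
    pSup n m t = ⨆ (ρ : Measure ℝ) (_ : IsProbabilityMeasure ρ ∧ ρ (Set.Icc (0:ℝ) 1)ᶜ = 0 ∧
      (∫ x, x ∂ρ) = m), Vval n t ρ := rfl

lemma le_pSup {n : ℕ} {m t : ℝ} {ρ : Measure ℝ} (h : IsProbabilityMeasure ρ)
    (h2 : ρ (Set.Icc (0:ℝ) 1)ᶜ = 0) (h3 : (∫ x, x ∂ρ) = m) :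
    Vval n t ρ ≤ pSup n m t := by
  rw [pSup_eq]
  exact le_iSup₂_of_le ρ ⟨h, h2, h3⟩ le_rfl

lemma pSup_pos (n : ℕ) {m t : ℝ} (hm0 : 0 < m) (hm1 : m < 1) (ht : 0 ≤ t) :
    0 < pSup n m t := by
  classical
  set β : Measure ℝ :=
    ENNReal.ofReal (1 - m) • Measure.dirac 0 + ENNReal.ofReal m • Measure.dirac 1 with hβ
  have hprob : IsProbabilityMeasure β := by
    constructor
    rw [hβ]
    simp only [Measure.add_apply, Measure.smul_apply, smul_eq_mul, measure_univ, mul_one]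
    rw [← ENNReal.ofReal_add (by linarith) (by linarith)]
    norm_num
  have hsupp : β (Set.Icc (0:ℝ) 1)ᶜ = 0 := by
    rw [hβ]
    simp only [Measure.add_apply, Measure.smul_apply, smul_eq_mul]
    rw [Measure.dirac_apply' _ measurableSet_Icc.compl,
      Measure.dirac_apply' _ measurableSet_Icc.compl]
    norm_num [Set.indicator_apply]
  have hmean : (∫ x, x ∂β) = m := by
    have hint : Integrable (fun x : ℝ => x) β := integrable_of_supp hsupp
    rw [hβ] at hint ⊢
    rw [integral_add_measure hint.left_of_add_measure hint.right_of_add_measure,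
      integral_smul_measure, integral_smul_measure, integral_dirac, integral_dirac]
    simp [ENNReal.toReal_ofReal, hm0.le, (by linarith : (0:ℝ) ≤ 1 - m)]
  have hval : ENNReal.ofReal (1 - m) ^ n ≤ Vval n t β := by
    have hsub : (Set.univ.pi fun _ : Fin n => ({0} : Set ℝ)) ⊆ {x : Fin n → ℝ | ∑ i, x i ≤ t} := by
      intro x hx
      simp only [Set.mem_pi, Set.mem_univ, forall_true_left, Set.mem_singleton_iff] at hx
      simp only [mem_setOf_eq]
      rw [show ∑ i, x i = 0 from Finset.sum_eq_zero (fun i _ => hx i)]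
      exact ht
    refine le_trans ?_ (measure_mono hsub)
    rw [Measure.pi_pi]
    have hβ0 : β {(0:ℝ)} = ENNReal.ofReal (1 - m) := by
      rw [hβ]
      simp only [Measure.add_apply, Measure.smul_apply, smul_eq_mul]
      rw [Measure.dirac_apply' _ (measurableSet_singleton _),
        Measure.dirac_apply' _ (measurableSet_singleton _)]
      simp
    rw [Finset.prod_congr rfl (fun i _ => hβ0)]
    simp
  have hpos : (0:ENNReal) < ENNReal.ofReal (1 - m) ^ n := by
    rw [pos_iff_ne_zero]
    apply pow_ne_zero
    rw [← pos_iff_ne_zero, ENNReal.ofReal_pos]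
    linarith
  calc (0:ENNReal) < ENNReal.ofReal (1 - m) ^ n := hpos
    _ ≤ Vval n t β := hval
    _ ≤ pSup n m t := le_pSup hprob hsupp hmean

end Bern




lemma exists_limit_measure (n : ℕ) (t m : ℝ) (σ : ℕ → Measure ℝ)
    (hprob : ∀ k, IsProbabilityMeasure (σ k)) (hsupp : ∀ k, σ k (Set.Icc (0:ℝ) 1)ᶜ = 0)
    (hm0 : 0 ≤ m) (hmean : ∀ k, (∫ x, x ∂σ k) = m) :
    ∃ ν : Measure ℝ, IsProbabilityMeasure ν ∧ ν (Set.Icc (0:ℝ) 1)ᶜ = 0 ∧ (∫ x, x ∂ν) = m ∧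
      ∃ φ : ℕ → ℕ, StrictMono φ ∧
        atTop.limsup (fun k => Vval n t (σ (φ k))) ≤ Vval n t ν := by
  classical
  -- the (real-valued) CDFs
  set h : ℕ → ℝ → ℝ := fun k x => (σ k (Iic x)).toReal with hdef
  have hIic_le_one : ∀ k (x : ℝ), σ k (Iic x) ≤ 1 := fun k x => prob_le_one
  have hne_top : ∀ k (s : Set ℝ), σ k s ≠ ⊤ := fun k s => measure_ne_top _ _
  have h01 : ∀ k x, h k x ∈ Icc (0:ℝ) 1 := by
    intro k x
    constructor
    · exact ENNReal.toReal_nonneg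
    · exact ENNReal.toReal_le_of_le_ofReal zero_le_one (by simpa using hIic_le_one k x)
  have hmono : ∀ k, Monotone (h k) := by
    intro k x y hxy
    exact ENNReal.toReal_mono (hne_top k _) (measure_mono (Iic_subset_Iic.mpr hxy))
  have hzero : ∀ k (x : ℝ), x < 0 → σ k (Iic x) = 0 := by
    intro k x hx
    refine measure_mono_null ?_ (hsupp k)
    intro y hy
    simp only [mem_Iic] at hy
    simp only [mem_compl_iff, mem_Icc, not_and_or, not_le]
    exact Or.inl (lt_of_le_of_lt hy hx)
  have hone : ∀ k (x : ℝ), 1 ≤ x → σ k (Iic x) = 1 := by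
    intro k x hx
    have hcompl : σ k (Ioi x) = 0 := by
      refine measure_mono_null ?_ (hsupp k)
      intro y hy
      simp only [mem_Ioi] at hy
      simp only [mem_compl_iff, mem_Icc, not_and_or, not_le]
      exact Or.inr (lt_of_le_of_lt hx hy)
    have := measure_compl (measurableSet_Ioi (a := x)) (hne_top k _)
    rw [compl_Ioi, hcompl] at this
    simp [this]
  -- Helly selection via sequential compactness of ℚ → Icc 0 1
  set X := ℚ → Icc (0:ℝ) 1 with hX
  have : CompactSpace X := by infer_instance
  set xs : ℕ → X := fun k q => ⟨h k q, h01 k q⟩ with hxs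
  obtain ⟨G, φ, hφ, hconvX⟩ := SeqCompactSpace.tendsto_subseq xs
  set g : ℚ → ℝ := fun q => (G q : ℝ) with hg
  have hconv : ∀ q : ℚ, Tendsto (fun k => h (φ k) q) atTop (𝓝 (g q)) := by
    intro q
    have h1 : Tendsto (fun k => (xs ∘ φ) k q) atTop (𝓝 (G q)) :=
      ((continuous_apply q).tendsto G).comp hconvX
    exact (continuous_subtype_val.tendsto (G q)).comp h1
  have hg01 : ∀ q, g q ∈ Icc (0:ℝ) 1 := fun q => (G q).2
  have hgmono : Monotone g := by
    intro q q' hqq'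
    exact le_of_tendsto_of_tendsto' (hconv q) (hconv q')
      (fun k => hmono (φ k) (by exact_mod_cast hqq'))
  have hgzero : ∀ q : ℚ, (q:ℝ) < 0 → g q = 0 := by
    intro q hq
    refine tendsto_nhds_unique (hconv q) ?_
    have : (fun k => h (φ k) q) = fun _ => (0:ℝ) := by
      funext k; simp [hdef, hzero _ _ hq]
    rw [this]; exact tendsto_const_nhds
  have hgone : ∀ q : ℚ, (1:ℝ) ≤ (q:ℝ) → g q = 1 := by
    intro q hq
    refine tendsto_nhds_unique (hconv q) ?_
    have : (fun k => h (φ k) q) = fun _ => (1:ℝ) := by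
      funext k; simp [hdef, hone _ _ hq]
    rw [this]; exact tendsto_const_nhds
  -- the limit CDF
  set F : ℝ → ℝ := fun x => sInf (g '' {q : ℚ | x < (q:ℝ)}) with hF
  have hne : ∀ x : ℝ, (g '' {q : ℚ | x < (q:ℝ)}).Nonempty := by
    intro x
    obtain ⟨q, hq⟩ := exists_rat_gt x
    exact ⟨g q, ⟨q, hq, rfl⟩⟩
  have hbdd : ∀ x : ℝ, BddBelow (g '' {q : ℚ | x < (q:ℝ)}) := by
    intro x
    exact ⟨0, fun y ⟨q, _, hq⟩ => hq ▸ (hg01 q).1⟩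
  have hFle : ∀ (x : ℝ) (q : ℚ), x < (q:ℝ) → F x ≤ g q := by
    intro x q hq
    exact csInf_le (hbdd x) ⟨q, hq, rfl⟩
  have hleF : ∀ (x : ℝ) (q : ℚ), (q:ℝ) ≤ x → g q ≤ F x := by
    intro x q hq
    refine le_csInf (hne x) ?_
    rintro y ⟨q', hq', rfl⟩
    exact hgmono (by exact_mod_cast le_of_lt (lt_of_le_of_lt hq hq'))
  have hF01 : ∀ x, F x ∈ Icc (0:ℝ) 1 := by
    intro x
    constructor
    · exact le_csInf (hne x) (fun y ⟨q, _, hq⟩ => hq ▸ (hg01 q).1)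
    · obtain ⟨q, hq⟩ := exists_rat_gt x
      exact (hFle x q hq).trans (hg01 q).2
  have hFmono : Monotone F := by
    intro x y hxy
    refine le_csInf (hne y) ?_
    rintro z ⟨q, hq, rfl⟩
    exact hFle x q (lt_of_le_of_lt hxy hq)
  have hFzero : ∀ x : ℝ, x < 0 → F x = 0 := by
    intro x hx
    obtain ⟨q, hq1, hq2⟩ := exists_rat_btwn hx
    refine le_antisymm ((hFle x q hq1).trans_eq (hgzero q hq2)) (hF01 x).1
  have hFone : ∀ x : ℝ, 1 ≤ x → F x = 1 := by
    intro x hx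
    refine le_antisymm (hF01 x).2 ?_
    refine le_csInf (hne x) ?_
    rintro y ⟨q, hq, rfl⟩
    rw [hgone q (hx.trans hq.le)]
  -- right continuity; build the Stieltjes function
  have hFright : ∀ x : ℝ, ContinuousWithinAt F (Ici x) x := by
    intro x
    rw [← continuousWithinAt_Ioi_iff_Ici]
    refine tendsto_order.2 ⟨?_, ?_⟩
    · intro b hb
      filter_upwards [self_mem_nhdsWithin] with y hy
      exact hb.trans_le (hFmono (le_of_lt hy))
    · intro b hb
      obtain ⟨z, ⟨q, hq, rfl⟩, hz⟩ := exists_lt_of_csInf_lt (hne x) hb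
      filter_upwards [Ioo_mem_nhdsGT hq] with y hy
      exact lt_of_le_of_lt (hFle y q hy.2) hz
  set Fs : StieltjesFunction ℝ := ⟨F, hFmono, hFright⟩ with hFs
  have hbot : Tendsto Fs atBot (𝓝 0) := by
    have heq : (Fs : ℝ → ℝ) =ᶠ[atBot] (fun _ => (0:ℝ)) :=
      eventually_atBot.mpr ⟨-1, fun x hx => hFzero x (by linarith)⟩
    exact Tendsto.congr' heq.symm tendsto_const_nhds
  have htop : Tendsto Fs atTop (𝓝 1) := by
    have heq : (Fs : ℝ → ℝ) =ᶠ[atTop] (fun _ => (1:ℝ)) :=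
      eventually_atTop.mpr ⟨1, fun x hx => hFone x hx⟩
    exact Tendsto.congr' heq.symm tendsto_const_nhds
  set ν : Measure ℝ := Fs.measure with hν
  have hνprob : IsProbabilityMeasure ν := Fs.isProbabilityMeasure hbot htop
  have hνIic : ∀ x : ℝ, ν (Iic x) = ENNReal.ofReal (F x) := by
    intro x
    rw [hν, Fs.measure_Iic hbot x]
    norm_num; rfl
  have hνIoc : ∀ a b : ℝ, ν (Ioc a b) = ENNReal.ofReal (F b - F a) := fun a b =>
    Fs.measure_Ioc a b
  have hν01 : ν (Set.Icc (0:ℝ) 1)ᶜ = 0 := by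
    have hdecomp : (Set.Icc (0:ℝ) 1)ᶜ = Iio 0 ∪ Ioi 1 := by
      ext x
      simp only [mem_compl_iff, mem_Icc, not_and_or, not_le, mem_union, mem_Iio, mem_Ioi]
    rw [hdecomp]
    refine measure_union_null ?_ ?_
    · refine measure_mono_null (fun x hx => ?_) (measure_iUnion_null (s := fun j : ℕ =>
        Iic (-(1/((j:ℝ)+1)))) (fun j => ?_))
      · simp only [mem_Iio] at hx
        obtain ⟨j, hj⟩ := exists_nat_one_div_lt (show (0:ℝ) < -x by linarith)
        exact mem_iUnion.mpr ⟨j, by simp only [mem_Iic]; linarith⟩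
      · rw [hνIic, hFzero _ (by
          have : (0:ℝ) < 1/((j:ℝ)+1) := by positivity
          linarith)]
        simp
    · have hcompl : ν (Ioi 1) = ν univ - ν (Iic 1) := by
        rw [← compl_Iic]
        exact measure_compl measurableSet_Iic (measure_ne_top _ _)
      rw [hcompl, hνIic, hFone 1 le_rfl, measure_univ]
      simp
  -- countable set of bad points
  set S : Set ℝ := {x | ¬ ContinuousAt F x} with hS
  have hSc : S.Countable := hFmono.countable_not_continuousAt
  -- convergence of CDFs at continuity points
  have hAconv : ∀ x : ℝ, x ∉ S → Tendsto (fun k => h (φ k) x) atTop (𝓝 (F x)) := by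
    intro x hx
    have hc : ContinuousAt F x := not_not.mp hx
    rw [Metric.tendsto_atTop]
    intro ε hε
    obtain ⟨z, ⟨q', hq', rfl⟩, hz⟩ := exists_lt_of_csInf_lt (hne x)
      (show F x < F x + ε/4 by linarith)
    obtain ⟨δ, hδ, hδ2⟩ := Metric.continuousAt_iff.mp hc (ε/4) (by linarith)
    obtain ⟨q, hq1, hq2⟩ := exists_rat_btwn (show x - δ/2 < x by linarith)
    have hFy : |F (x - δ/2) - F x| < ε/4 := by
      have := hδ2 (show dist (x - δ/2) x < δ by
        rw [Real.dist_eq]; rw [abs_of_nonpos (by linarith)]; linarith)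
      rwa [Real.dist_eq] at this
    have hgq_lb : F x - ε/4 < g q := by
      have h1 : F (x - δ/2) ≤ g q := hFle _ q hq1
      have h2 : F x - ε/4 < F (x - δ/2) := by
        rcases abs_sub_lt_iff.mp hFy with ⟨_, hb⟩
        linarith
      linarith
    obtain ⟨N1, hN1⟩ := Metric.tendsto_atTop.mp (hconv q) (ε/4) (by linarith)
    obtain ⟨N2, hN2⟩ := Metric.tendsto_atTop.mp (hconv q') (ε/4) (by linarith)
    refine ⟨max N1 N2, fun k hk => ?_⟩
    have e1 := hN1 k (le_of_max_le_left hk)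
    have e2 := hN2 k (le_of_max_le_right hk)
    rw [Real.dist_eq] at e1 e2 ⊢
    rcases abs_sub_lt_iff.mp e1 with ⟨e1a, e1b⟩
    rcases abs_sub_lt_iff.mp e2 with ⟨e2a, e2b⟩
    have hm1 : h (φ k) q ≤ h (φ k) x := hmono (φ k) hq2.le
    have hm2 : h (φ k) x ≤ h (φ k) q' := hmono (φ k) hq'.le
    have hub : g q' ≤ F x + ε/4 := le_of_lt hz
    have hlb : g q ≤ F x := hleF x q hq2.le
    rw [abs_sub_lt_iff]
    constructor <;> nlinarith
  -- complement formula
  have hIoi : ∀ (ρ : Measure ℝ) (_ : IsProbabilityMeasure ρ) (x : ℝ),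
      ρ (Ioi x) = 1 - ρ (Iic x) := by
    intro ρ hρ x
    rw [← compl_Iic, measure_compl measurableSet_Iic (measure_ne_top _ _), measure_univ]
  have haes : ∀ (ρ : Measure ℝ), ρ (Set.Icc (0:ℝ) 1)ᶜ = 0 → (∀ᵐ x ∂ρ, x ∈ Set.Icc (0:ℝ) 1) := by
    intro ρ hρ
    rw [ae_iff]
    exact hρ
  -- layer cake representation of the mean
  have hlayer : ∀ (ρ : Measure ℝ) (_ : IsProbabilityMeasure ρ) (_ : ρ (Set.Icc (0:ℝ) 1)ᶜ = 0),
      (∫⁻ s in Ioi (0:ℝ), ρ (Ioi s)) = ENNReal.ofReal (∫ x, x ∂ρ) := by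
    intro ρ hρ hρs
    have hnn : 0 ≤ᵐ[ρ] (fun x : ℝ => x) := by
      filter_upwards [haes ρ hρs] with x hx using hx.1
    have h1 : (∫⁻ x, ENNReal.ofReal x ∂ρ) = ∫⁻ s in Ioi 0, ρ {a : ℝ | s < a} :=
      lintegral_eq_lintegral_meas_lt ρ hnn aemeasurable_id
    have h2 : (∫ x, x ∂ρ) = (∫⁻ x, ENNReal.ofReal x ∂ρ).toReal := by
      rw [integral_eq_lintegral_of_nonneg_ae hnn measurable_id.aestronglyMeasurable]
    have h3 : (∫⁻ x, ENNReal.ofReal x ∂ρ) ≠ ⊤ := by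
      refine ne_of_lt (lt_of_le_of_lt ?_ (by norm_num : (1:ENNReal) < ⊤))
      calc (∫⁻ x, ENNReal.ofReal x ∂ρ) ≤ ∫⁻ _, 1 ∂ρ := by
            refine lintegral_mono_ae ?_
            filter_upwards [haes ρ hρs] with x hx
            exact ENNReal.ofReal_le_one.mpr hx.2
        _ = 1 := by simp
    have h4 : ∀ s : ℝ, {a : ℝ | s < a} = Ioi s := fun s => rfl
    rw [h2, ENNReal.ofReal_toReal h3, h1]
    rfl
  have hmean_k : ∀ k, (∫⁻ s in Ioi (0:ℝ), σ (φ k) (Ioi s)) = ENNReal.ofReal m := by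
    intro k
    rw [hlayer _ (hprob _) (hsupp _), hmean]
  have hν_layer : (∫⁻ s in Ioi (0:ℝ), ν (Ioi s)) = ENNReal.ofReal m := by
    have hSnull : volume S = 0 := hSc.measure_zero _
    have hDCT := tendsto_lintegral_of_dominated_convergence
      (μ := volume.restrict (Ioi (0:ℝ)))
      (F := fun k s => σ (φ k) (Ioi s)) (f := fun s => ν (Ioi s))
      (bound := (Iic (1:ℝ)).indicator (fun _ => (1:ENNReal)))
      (fun k => (Antitone.measurable (fun s s' hss' =>
        measure_mono (Ioi_subset_Ioi hss'))))
      (fun k => Eventually.of_forall (fun s => by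
        by_cases hs : s ≤ 1
        · rw [Set.indicator_of_mem (mem_Iic.mpr hs)]
          exact prob_le_one
        · rw [Set.indicator_of_notMem (fun hmem => hs (mem_Iic.mp hmem))]
          refine le_of_eq (measure_mono_null (fun y hy => ?_) (hsupp (φ k)))
          simp only [mem_Ioi] at hy
          simp only [mem_compl_iff, mem_Icc, not_and_or, not_le]
          exact Or.inr (by linarith [not_le.mp hs])))
      ?_ ?_
    · have hconst : Tendsto (fun k => ∫⁻ a in Ioi (0:ℝ), σ (φ k) (Ioi a)) atTop
          (𝓝 (ENNReal.ofReal m)) := by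
        have heq : (fun k => ∫⁻ a in Ioi (0:ℝ), σ (φ k) (Ioi a))
            = fun _ => ENNReal.ofReal m := by
          funext k; exact hmean_k k
        rw [heq]; exact tendsto_const_nhds
      exact tendsto_nhds_unique hDCT hconst
    · rw [lintegral_indicator measurableSet_Iic]
      rw [setLIntegral_const, Measure.restrict_apply measurableSet_Iic]
      have : (Iic (1:ℝ) ∩ Ioi 0) = Ioc 0 1 := by
        ext y; simp only [mem_inter_iff, mem_Iic, mem_Ioi, mem_Ioc]; tauto
      rw [this]
      simp [Real.volume_Ioc]
    · have hae : ∀ᵐ s ∂(volume.restrict (Ioi (0:ℝ))), s ∉ S :=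
        ae_restrict_of_ae (ae_iff.mpr (by simpa using hSnull))
      filter_upwards [hae] with s hs
      have hIick : ∀ k, σ (φ k) (Iic s) = ENNReal.ofReal (h (φ k) s) := by
        intro k
        rw [hdef, ENNReal.ofReal_toReal (hne_top _ _)]
      have htend : Tendsto (fun k => σ (φ k) (Iic s)) atTop (𝓝 (ν (Iic s))) := by
        rw [hνIic]
        have := (ENNReal.continuous_ofReal.tendsto (F s)).comp (hAconv s hs)
        refine this.congr (fun k => ?_)
        rw [Function.comp_apply, ← hIick]
      have h1 : Tendsto (fun k => σ (φ k) (Ioi s)) atTop (𝓝 (1 - ν (Iic s))) := by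
        have := ENNReal.Tendsto.sub (tendsto_const_nhds :
          Tendsto (fun _ : ℕ => (1:ENNReal)) atTop (𝓝 1)) htend (Or.inl (by simp))
        refine this.congr (fun k => ?_)
        rw [← hIoi _ (hprob _)]
      rw [hIoi ν hνprob s]
      exact h1
  have hνmean : (∫ x, x ∂ν) = m := by
    have := hlayer ν hνprob hν01
    rw [hν_layer] at this
    have hnn : 0 ≤ ∫ x, x ∂ν := by
      refine integral_nonneg_of_ae ?_
      filter_upwards [haes ν hν01] with x hx using hx.1
    exact ((ENNReal.ofReal_eq_ofReal_iff hm0 hnn).mp this).symm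
  -- ============ the limsup inequality via grid approximation ============
  refine ⟨ν, hνprob, hν01, hνmean, φ, hφ, ?_⟩
  have hAmeas : MeasurableSet {x : Fin n → ℝ | ∑ i, x i ≤ t} :=
    measurableSet_le (Finset.measurable_sum _ (fun i _ => measurable_pi_apply i))
      measurable_const
  have hEmeas : ∀ r : ℝ, MeasurableSet {x : Fin n → ℝ | ∑ i, x i ≤ r} := fun r =>
    measurableSet_le (Finset.measurable_sum _ (fun i _ => measurable_pi_apply i))
      measurable_const
  have key : ∀ M : ℕ, atTop.limsup (fun k => Vval n t (σ (φ k)))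
      ≤ Measure.pi (fun _ : Fin n => ν)
        {x : Fin n → ℝ | ∑ i, x i ≤ t + 2*(n:ℝ)/((M:ℝ)+1)} := by
    intro M
    set Mr : ℝ := (M:ℝ)+1 with hMr
    have hMrpos : (0:ℝ) < Mr := by positivity
    -- good grid points
    have hgrid : ∀ j : ℕ, ∃ v : ℝ, v ∈ Ioo (((j:ℝ)-1)/Mr) ((j:ℝ)/Mr) ∧ v ∉ S := by
      intro j
      by_contra hcon
      push_neg at hcon
      have hsubS : Ioo (((j:ℝ)-1)/Mr) ((j:ℝ)/Mr) ⊆ S := fun v hv => hcon v hv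
      have h1 := measure_mono_null hsubS (hSc.measure_zero volume)
      rw [Real.volume_Ioo] at h1
      have heq : ((j:ℝ)/Mr - ((j:ℝ)-1)/Mr) = 1/Mr := by ring
      rw [heq] at h1
      exact absurd h1 (ne_of_gt (ENNReal.ofReal_pos.mpr (by positivity)))
    choose u hu1 hu2 using hgrid
    have humono : StrictMono u := by
      refine strictMono_nat_of_lt_succ (fun j => ?_)
      have h1 := (hu1 j).2
      have h2 := (hu1 (j+1)).1
      push_cast at h2
      have h3 : ((j:ℝ)+1-1)/Mr = (j:ℝ)/Mr := by ring
      rw [h3] at h2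
      exact h1.trans h2
    have hu0 : u 0 < 0 := by
      have := (hu1 0).2
      simpa using this
    have hutop : 1 < u (M+2) := by
      have := (hu1 (M+2)).1
      have heq : (((M+2:ℕ)):ℝ) = (M:ℝ)+2 := by push_cast; ring
      rw [heq] at this
      have h2 : ((M:ℝ)+2-1) = Mr := by rw [hMr]; ring
      rw [h2, div_self hMrpos.ne'] at this
      exact this
    have hgap : ∀ j : ℕ, u (j+1) ≤ u j + 2/Mr := by
      intro j
      have h1 := (hu1 j).1
      have h2 := (hu1 (j+1)).2
      push_cast at h2
      have h3 : ((j:ℝ)+1)/Mr = ((j:ℝ)-1)/Mr + 2/Mr := by ring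
      linarith
    -- boxes
    set Bx : (Fin n → ℕ) → Set (Fin n → ℝ) :=
      fun c => Set.pi univ (fun i => Ioc (u (c i)) (u (c i + 1))) with hBx
    set CS : Finset (Fin n → ℕ) :=
      (Fintype.piFinset (fun _ : Fin n => Finset.range (M+2))).filter
        (fun c => (∑ i, u (c i)) ≤ t) with hCS
    have hBxmeas : ∀ c, MeasurableSet (Bx c) := fun c =>
      MeasurableSet.univ_pi (fun i => measurableSet_Ioc)
    -- covering
    have hcover : {x : Fin n → ℝ | ∑ i, x i ≤ t} ⊆
        (⋃ (i : Fin n), (fun x : Fin n → ℝ => x i) ⁻¹' (Set.Icc (0:ℝ) 1)ᶜ)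
          ∪ (⋃ c ∈ CS, Bx c) := by
      intro x hx
      by_cases hxin : ∀ i, x i ∈ Set.Icc (0:ℝ) 1
      · right
        set c : Fin n → ℕ := fun i => @Nat.findGreatest (fun j => u j < x i) (Classical.decPred _) (M+1) with hc
        have hspec : ∀ i, u (c i) < x i := by
          intro i
          exact Nat.findGreatest_spec (P := fun j => u j < x i) (Nat.zero_le _) (show u 0 < x i from hu0.trans_le (hxin i).1)
        have hle : ∀ i, c i ≤ M+1 := fun i => Nat.findGreatest_le (P := fun j => u j < x i) _
        have hupper : ∀ i, x i ≤ u (c i + 1) := by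
          intro i
          by_cases hci : c i = M+1
          · rw [hci]
            exact le_trans (hxin i).2 (le_of_lt hutop)
          · have hlt : c i + 1 ≤ M+1 := Nat.succ_le_of_lt (lt_of_le_of_ne (hle i) hci)
            have := Nat.findGreatest_is_greatest (P := fun j => u j < x i) (Nat.lt_succ_self (c i)) hlt
            exact not_lt.mp this
        have hmem : c ∈ CS := by
          rw [hCS, Finset.mem_filter]
          constructor
          · rw [Fintype.mem_piFinset]
            intro i
            rw [Finset.mem_range]
            exact Nat.lt_succ_of_le (hle i)
          · refine le_trans (Finset.sum_le_sum (fun i _ => (hspec i).le)) hx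
        exact mem_biUnion hmem (Set.mem_univ_pi.mpr (fun i => ⟨hspec i, hupper i⟩))
      · left
        push_neg at hxin
        obtain ⟨i, hi⟩ := hxin
        exact mem_iUnion.mpr ⟨i, hi⟩
    -- step 1 : per-k box bound
    have step1 : ∀ k, Vval n t (σ (φ k)) ≤
        ∑ c ∈ CS, ∏ i, σ (φ k) (Ioc (u (c i)) (u (c i + 1))) := by
      intro k
      haveI := hprob (φ k)
      have hb : Measure.pi (fun _ : Fin n => σ (φ k))
          (⋃ (i : Fin n), (fun x : Fin n → ℝ => x i) ⁻¹' (Set.Icc (0:ℝ) 1)ᶜ) = 0 :=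
        measure_iUnion_null (fun i => Measure.pi_eval_preimage_null _ (hsupp (φ k)))
      calc Vval n t (σ (φ k)) ≤ Measure.pi (fun _ : Fin n => σ (φ k))
            ((⋃ (i : Fin n), (fun x : Fin n → ℝ => x i) ⁻¹' (Set.Icc (0:ℝ) 1)ᶜ)
              ∪ (⋃ c ∈ CS, Bx c)) := measure_mono hcover
        _ ≤ Measure.pi (fun _ : Fin n => σ (φ k))
              (⋃ (i : Fin n), (fun x : Fin n → ℝ => x i) ⁻¹' (Set.Icc (0:ℝ) 1)ᶜ)
            + Measure.pi (fun _ : Fin n => σ (φ k)) (⋃ c ∈ CS, Bx c) := measure_union_le _ _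
        _ = Measure.pi (fun _ : Fin n => σ (φ k)) (⋃ c ∈ CS, Bx c) := by rw [hb, zero_add]
        _ ≤ ∑ c ∈ CS, Measure.pi (fun _ : Fin n => σ (φ k)) (Bx c) :=
            measure_biUnion_finset_le _ _
        _ = ∑ c ∈ CS, ∏ i, σ (φ k) (Ioc (u (c i)) (u (c i + 1))) := by
            refine Finset.sum_congr rfl (fun c _ => ?_)
            rw [hBx, Measure.pi_pi]
    -- convergence of the box sums
    have hbox_tendsto : ∀ (a b : ℝ), a ∉ S → b ∉ S → a ≤ b →
        Tendsto (fun k => ((σ (φ k)) (Ioc a b)).toReal) atTop (𝓝 (F b - F a)) := by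
      intro a b haS hbS hab
      have hIocEq : ∀ k, (σ (φ k)) (Ioc a b) = (σ (φ k)) (Iic b) - (σ (φ k)) (Iic a) := by
        intro k
        rw [← Iic_sdiff_Iic]
        exact measure_diff (Iic_subset_Iic.mpr hab) measurableSet_Iic.nullMeasurableSet
          (hne_top _ _)
      have htoReal : ∀ k, ((σ (φ k)) (Ioc a b)).toReal = h (φ k) b - h (φ k) a := by
        intro k
        rw [hIocEq k, ENNReal.toReal_sub_of_le (measure_mono (Iic_subset_Iic.mpr hab))
          (hne_top _ _)]
      simp only [htoReal]
      exact Tendsto.sub (hAconv b hbS) (hAconv a haS)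
    set W : ℕ → ℝ := fun k => ∑ c ∈ CS, ∏ i,
      ((σ (φ k)) (Ioc (u (c i)) (u (c i + 1)))).toReal with hW
    have hWlim : Tendsto W atTop
        (𝓝 (∑ c ∈ CS, ∏ i, (F (u (c i + 1)) - F (u (c i))))) := by
      refine tendsto_finset_sum _ (fun c _ => ?_)
      refine tendsto_finset_prod _ (fun i _ => ?_)
      exact hbox_tendsto _ _ (hu2 _) (hu2 _) (humono (Nat.lt_succ_self _)).le
    -- bridge to ENNReal
    have hbridge : ∀ k, (∑ c ∈ CS, ∏ i, σ (φ k) (Ioc (u (c i)) (u (c i + 1))))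
        = ENNReal.ofReal (W k) := by
      intro k
      rw [hW, ENNReal.ofReal_sum_of_nonneg (fun c _ =>
        Finset.prod_nonneg (fun i _ => ENNReal.toReal_nonneg))]
      refine Finset.sum_congr rfl (fun c _ => ?_)
      rw [ENNReal.ofReal_prod_of_nonneg (fun i _ => ENNReal.toReal_nonneg)]
      refine Finset.prod_congr rfl (fun i _ => ?_)
      rw [ENNReal.ofReal_toReal (hne_top _ _)]
    -- limsup bound
    have hlimsup1 : atTop.limsup (fun k => Vval n t (σ (φ k)))
        ≤ ENNReal.ofReal (∑ c ∈ CS, ∏ i, (F (u (c i + 1)) - F (u (c i)))) := by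
      have h2 : Tendsto (fun k => ENNReal.ofReal (W k)) atTop
          (𝓝 (ENNReal.ofReal (∑ c ∈ CS, ∏ i, (F (u (c i + 1)) - F (u (c i)))))) :=
        (ENNReal.continuous_ofReal.tendsto _).comp hWlim
      rw [← h2.limsup_eq]
      refine limsup_le_limsup (Eventually.of_forall (fun k => ?_))
      show Vval n t (σ (φ k)) ≤ ENNReal.ofReal (W k)
      rw [← hbridge k]
      exact step1 k
    -- identify with ν-measure of the union of boxes
    have hν_boxes : ENNReal.ofReal (∑ c ∈ CS, ∏ i, (F (u (c i + 1)) - F (u (c i))))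
        = ∑ c ∈ CS, Measure.pi (fun _ : Fin n => ν) (Bx c) := by
      rw [ENNReal.ofReal_sum_of_nonneg (fun c _ => Finset.prod_nonneg (fun i _ =>
        sub_nonneg.mpr (hFmono (humono (Nat.lt_succ_self _)).le)))]
      refine Finset.sum_congr rfl (fun c _ => ?_)
      rw [hBx, Measure.pi_pi, ENNReal.ofReal_prod_of_nonneg (fun i _ =>
        sub_nonneg.mpr (hFmono (humono (Nat.lt_succ_self _)).le))]
      exact Finset.prod_congr rfl (fun i _ => (hνIoc _ _).symm)
    have hdisj : (CS : Set (Fin n → ℕ)).PairwiseDisjoint Bx := by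
      intro c _ c' _ hcc'
      obtain ⟨i, hi⟩ := Function.ne_iff.mp hcc'
      refine Set.disjoint_left.mpr (fun x hxc hxc' => ?_)
      have h1 := (Set.mem_univ_pi.mp hxc) i
      have h2 := (Set.mem_univ_pi.mp hxc') i
      rcases lt_or_gt_of_ne hi with hlt | hgt
      · have h3 : u (c i + 1) ≤ u (c' i) := humono.monotone (Nat.succ_le_of_lt hlt)
        have := h1.2
        have := h2.1
        linarith
      · have h3 : u (c' i + 1) ≤ u (c i) := humono.monotone (Nat.succ_le_of_lt hgt)
        have := h1.1
        have := h2.2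
        linarith
    -- union of boxes is inside the enlarged sublevel set
    have hunion_sub : (⋃ c ∈ CS, Bx c) ⊆
        {x : Fin n → ℝ | ∑ i, x i ≤ t + 2*(n:ℝ)/Mr} := by
      intro x hx
      obtain ⟨c, hcCS, hxc⟩ := mem_iUnion₂.mp hx
      have hcsum : (∑ i, u (c i)) ≤ t := (Finset.mem_filter.mp hcCS).2
      have hxle : ∀ i, x i ≤ u (c i) + 2/Mr := by
        intro i
        exact le_trans ((Set.mem_univ_pi.mp hxc) i).2 (hgap (c i))
      have : (∑ i, x i) ≤ (∑ i, u (c i)) + (n:ℝ) * (2/Mr) := by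
        calc (∑ i, x i) ≤ ∑ i, (u (c i) + 2/Mr) := Finset.sum_le_sum (fun i _ => hxle i)
          _ = (∑ i, u (c i)) + (n:ℝ) * (2/Mr) := by
              rw [Finset.sum_add_distrib, Finset.sum_const, Finset.card_univ,
                Fintype.card_fin, nsmul_eq_mul]
      simp only [mem_setOf_eq]
      have heq : (n:ℝ) * (2/Mr) = 2*(n:ℝ)/Mr := by ring
      linarith [this, hcsum, heq.le]
    calc atTop.limsup (fun k => Vval n t (σ (φ k)))
        ≤ ENNReal.ofReal (∑ c ∈ CS, ∏ i, (F (u (c i + 1)) - F (u (c i)))) := hlimsup1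
      _ = ∑ c ∈ CS, Measure.pi (fun _ : Fin n => ν) (Bx c) := hν_boxes
      _ = Measure.pi (fun _ : Fin n => ν) (⋃ c ∈ CS, Bx c) :=
          (measure_biUnion_finset hdisj (fun c _ => hBxmeas c)).symm
      _ ≤ Measure.pi (fun _ : Fin n => ν)
            {x : Fin n → ℝ | ∑ i, x i ≤ t + 2*(n:ℝ)/Mr} := measure_mono hunion_sub
  -- let M → ∞
  haveI := hνprob
  have hanti : Antitone (fun M : ℕ =>
      {x : Fin n → ℝ | ∑ i, x i ≤ t + 2*(n:ℝ)/((M:ℝ)+1)}) := by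
    intro M M' hMM' x hx
    simp only [mem_setOf_eq] at hx ⊢
    have h1 : 2*(n:ℝ)/((M':ℝ)+1) ≤ 2*(n:ℝ)/((M:ℝ)+1) := by
      apply div_le_div_of_nonneg_left (by positivity) (by positivity)
      exact add_le_add_left (Nat.cast_le.mpr hMM') 1
    linarith
  have hiInter : (⋂ M : ℕ, {x : Fin n → ℝ | ∑ i, x i ≤ t + 2*(n:ℝ)/((M:ℝ)+1)})
      = {x : Fin n → ℝ | ∑ i, x i ≤ t} := by
    ext x
    simp only [mem_iInter, mem_setOf_eq]
    constructor
    · intro hx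
      by_contra hcon
      push_neg at hcon
      set d : ℝ := (∑ i, x i) - t with hd
      have hdpos : 0 < d := by simp only [hd]; linarith
      obtain ⟨M, hM⟩ := exists_nat_gt (2*(n:ℝ)/d)
      have h2 : 2*(n:ℝ)/((M:ℝ)+1) < d := by
        rw [div_lt_iff₀ (by positivity)]
        have h3 : 2*(n:ℝ) < d * ((M:ℝ)) := by
          rw [← div_lt_iff₀' hdpos]
          exact hM
        nlinarith
      have := hx M
      simp only [hd] at h2
      linarith
    · intro hx M
      have : (0:ℝ) ≤ 2*(n:ℝ)/((M:ℝ)+1) := by positivity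
      linarith
  have htminter : Tendsto (fun M : ℕ => Measure.pi (fun _ : Fin n => ν)
      {x : Fin n → ℝ | ∑ i, x i ≤ t + 2*(n:ℝ)/((M:ℝ)+1)}) atTop
      (𝓝 (Measure.pi (fun _ : Fin n => ν) {x : Fin n → ℝ | ∑ i, x i ≤ t})) := by
    rw [← hiInter]
    exact tendsto_measure_iInter_atTop (fun M => (hEmeas _).nullMeasurableSet) hanti
      ⟨0, measure_ne_top _ _⟩
  exact ge_of_tendsto' htminter key


lemma exists_maximizer (n : ℕ) {m : ℝ} (t : ℝ) (hm0 : 0 < m) (hm1 : m < 1) (ht : 0 ≤ t) :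
    ∃ ν : Measure ℝ, IsProbabilityMeasure ν ∧ ν (Set.Icc (0:ℝ) 1)ᶜ = 0 ∧
      (∫ x, x ∂ν) = m ∧ Vval n t ν = pSup n m t := by
  classical
  set s := pSup n m t with hs
  have hspos : 0 < s := pSup_pos n hm0 hm1 ht
  have hsle : s ≤ 1 := by
    rw [hs, pSup_eq]
    refine iSup₂_le (fun ρ hρ => ?_)
    haveI := hρ.1
    exact prob_le_one
  have hstop : s ≠ ⊤ := (hsle.trans_lt (by norm_num)).ne
  have hseq : ∀ k : ℕ, ∃ ρ : Measure ℝ, (IsProbabilityMeasure ρ ∧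
      ρ (Set.Icc (0:ℝ) 1)ᶜ = 0 ∧ (∫ x, x ∂ρ) = m) ∧
      s - ((k:ENNReal)+1)⁻¹ < Vval n t ρ := by
    intro k
    have hlt : s - ((k:ENNReal)+1)⁻¹ < s :=
      ENNReal.sub_lt_self hstop hspos.ne' (ENNReal.inv_ne_zero.mpr (by
        exact_mod_cast ENNReal.natCast_ne_top (k+1)))
    rw [hs, pSup_eq] at hlt
    obtain ⟨ρ, hρ⟩ := lt_iSup_iff.mp hlt
    obtain ⟨hP, h3⟩ := lt_iSup_iff.mp hρ
    exact ⟨ρ, hP, h3⟩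
  choose ρs hP hlb using hseq
  obtain ⟨ν, hνprob, hν01, hνmean, φ, hφ, hlim⟩ :=
    exists_limit_measure n t m ρs (fun k => (hP k).1) (fun k => (hP k).2.1) hm0.le
      (fun k => (hP k).2.2)
  refine ⟨ν, hνprob, hν01, hνmean, le_antisymm ?_ ?_⟩
  · haveI := hνprob
    exact le_pSup hνprob hν01 hνmean
  · -- s ≤ Vval n t ν
    have htend0 : Tendsto (fun k : ℕ => ((φ k : ENNReal)+1)⁻¹) atTop (𝓝 0) := by
      have h1 : Tendsto (fun k : ℕ => (φ k) + 1) atTop atTop :=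
        (tendsto_add_atTop_nat 1).comp hφ.tendsto_atTop
      have h2 := ENNReal.tendsto_inv_nat_nhds_zero.comp h1
      refine h2.congr (fun k => ?_)
      simp only [Function.comp_apply]
      push_cast
      rfl
    have h1 : Tendsto (fun k : ℕ => s - ((φ k : ENNReal)+1)⁻¹) atTop (𝓝 s) := by
      have := ENNReal.Tendsto.sub (tendsto_const_nhds :
        Tendsto (fun _ : ℕ => s) atTop (𝓝 s)) htend0 (Or.inl hstop)
      simpa using this
    calc s = atTop.limsup (fun k : ℕ => s - ((φ k : ENNReal)+1)⁻¹) := h1.limsup_eq.symm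
      _ ≤ atTop.limsup (fun k => Vval n t (ρs (φ k))) :=
          limsup_le_limsup (Eventually.of_forall (fun k => (hlb (φ k)).le))
      _ ≤ Vval n t ν := hlim

lemma Vval_eq_zero_of_dirac (n : ℕ) {t m : ℝ} (ht : t < m * n)
    (ν : Measure ℝ) [IsProbabilityMeasure ν] (hν : ν {x : ℝ | x ≠ m} = 0) :
    Vval n t ν = 0 := by
  have hsub : {x : Fin n → ℝ | ∑ i, x i ≤ t} ⊆
      ⋃ i : Fin n, (fun x : Fin n → ℝ => x i) ⁻¹' {y : ℝ | y ≠ m} := by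
    intro x hx
    by_contra hcon
    simp only [mem_iUnion, mem_preimage, mem_setOf_eq, not_exists, not_not] at hcon
    have hsum : ∑ i, x i = n * m := by
      rw [Finset.sum_congr rfl (fun i _ => hcon i), Finset.sum_const, Finset.card_univ,
        Fintype.card_fin, nsmul_eq_mul]
    simp only [mem_setOf_eq, hsum] at hx
    nlinarith [hx, ht]
  exact measure_mono_null hsub
    (measure_iUnion_null (fun i => Measure.pi_eval_preimage_null _ hν))


/-- If `μ` is a probability measure on `[0,1]` with mean `m` supported in `[a,b]` with
`0 < a` and `b < 1`, then rescaling around `m` by some `α > 1` gives a measure `μ*` on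
`[0,1]` with mean `m` such that `P_{μ*}(S_n ≤ t) ≥ P_μ(S_n ≤ t)` for all `t < mn`.
Consequently, the supremum `p(m,t)` is attained by a measure whose support contains
`0` or `1`. -/
theorem stmt_6 (n : ℕ) (hn : 1 ≤ n) (m : ℝ) (hm0 : 0 < m) (hm1 : m < 1)
    (μ : Measure ℝ) [IsProbabilityMeasure μ]
    (a b : ℝ) (ha : 0 < a) (hab : a ≤ b) (hb : b < 1)
    (hsupp : μ (Set.Icc a b)ᶜ = 0) (hmean : (∫ x, x ∂μ) = m) :
    (∃ α : ℝ, 1 < α ∧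
      (IsProbabilityMeasure (μ.map (fun x => m + α * (x - m))) ∧
        (μ.map (fun x => m + α * (x - m))) (Set.Icc (0:ℝ) 1)ᶜ = 0 ∧
        (∫ x, x ∂(μ.map (fun x => m + α * (x - m)))) = m ∧
        ∀ t : ℝ, t < m * n →
          Measure.pi (fun _ : Fin n => μ) {x | ∑ i, x i ≤ t}
            ≤ Measure.pi (fun _ : Fin n => μ.map (fun x => m + α * (x - m)))
                {x | ∑ i, x i ≤ t})) ∧
    (∀ t : ℝ, 0 ≤ t → t < m * n →
      ∃ ν : Measure ℝ, IsProbabilityMeasure ν ∧ ν (Set.Icc (0:ℝ) 1)ᶜ = 0 ∧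
        (∫ x, x ∂ν) = m ∧
        Measure.pi (fun _ : Fin n => ν) {x | ∑ i, x i ≤ t} = pSup n m t ∧
        ((0:ℝ) ∈ measSupport ν ∨ (1:ℝ) ∈ measSupport ν)) := by
  classical
  constructor
  · -- Part 1
    have hm_mem : m ∈ Set.Icc a b := mean_mem_Icc hsupp hmean
    set ε : ℝ := min a (1-b) with hε
    have hεa : ε ≤ a := min_le_left _ _
    have hεb : ε ≤ 1-b := min_le_right _ _
    have hεpos : 0 < ε := lt_min ha (by linarith)
    set α : ℝ := 1 + ε with hα
    have hα1 : 1 < α := by rw [hα]; linarith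
    have hrange : ∀ x ∈ Set.Icc a b, m + α * (x - m) ∈ Set.Icc (0:ℝ) 1 := by
      intro x hx
      have h1 := hm_mem.1
      have h2 := hm_mem.2
      have hx1 := hx.1
      have hx2 := hx.2
      rw [hα]
      constructor
      · nlinarith
      · nlinarith
    exact ⟨α, hα1, stretch_prob, stretch_supp hsupp hrange, stretch_mean hsupp hmean,
      fun t ht => stretch_V n t hα1.le ht⟩
  · -- Part 2
    intro t ht0 htmn
    obtain ⟨ν, hνprob, hν01, hνmean, hνmax⟩ := exists_maximizer n t hm0 hm1 ht0
    haveI := hνprob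
    by_cases hsupp01 : (0:ℝ) ∈ measSupport ν ∨ (1:ℝ) ∈ measSupport ν
    · exact ⟨ν, hνprob, hν01, hνmean, hνmax, hsupp01⟩
    push_neg at hsupp01
    obtain ⟨h0, h1⟩ := hsupp01
    have hclosed := isClosed_measSupport ν
    have hnemp : (measSupport ν).Nonempty := measSupport_nonempty
    have hsubI : measSupport ν ⊆ Set.Icc 0 1 := measSupport_subset_Icc hν01
    have hbddb : BddBelow (measSupport ν) := BddBelow.mono hsubI bddBelow_Icc
    have hbdda : BddAbove (measSupport ν) := BddAbove.mono hsubI bddAbove_Icc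
    set a' : ℝ := sInf (measSupport ν) with ha'
    set b' : ℝ := sSup (measSupport ν) with hb'
    have ha'mem : a' ∈ measSupport ν := hclosed.csInf_mem hnemp hbddb
    have hb'mem : b' ∈ measSupport ν := hclosed.csSup_mem hnemp hbdda
    have ha'0 : 0 < a' :=
      lt_of_le_of_ne (hsubI ha'mem).1 (fun h => h0 (h ▸ ha'mem))
    have hb'1 : b' < 1 :=
      lt_of_le_of_ne (hsubI hb'mem).2 (fun h => h1 (h ▸ hb'mem))
    have hsupp' : ν (Set.Icc a' b')ᶜ = 0 := by
      refine measure_mono_null (fun x hx => ?_) (measSupport_compl_null ν)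
      simp only [mem_compl_iff, mem_Icc, not_and_or, not_le] at hx
      intro hmem
      rcases hx with hx | hx
      · exact absurd (csInf_le hbddb hmem) (not_le.mpr hx)
      · exact absurd (le_csSup hbdda hmem) (not_le.mpr hx)
    have hm_mem : m ∈ Set.Icc a' b' := mean_mem_Icc hsupp' hνmean
    have hspos : 0 < pSup n m t := pSup_pos n hm0 hm1 ht0
    have hdirac_case : ∀ c : ℝ, (∀ᵐ x ∂ν, x = c) → False := by
      intro c hc
      have hdirac : ν {x : ℝ | x ≠ m} = 0 := by
        have hcm : c = m := by
          have : (∫ x, x ∂ν) = c := by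
            rw [integral_congr_ae (g := fun _ => c) (by filter_upwards [hc] with x hx using hx)]
            simp
          rw [hνmean] at this
          exact this.symm
        rw [ae_iff] at hc
        rw [← hcm]
        simpa using hc
      have hz := Vval_eq_zero_of_dirac n htmn ν hdirac
      rw [hνmax] at hz
      exact absurd hz hspos.ne'
    have ha'm : a' < m := by
      rcases lt_or_eq_of_le hm_mem.1 with h | h
      · exact h
      exfalso
      have hint : Integrable (fun x : ℝ => x) ν := integrable_of_supp hsupp'
      have hae : ∀ᵐ x ∂ν, x ∈ Set.Icc a' b' := ae_mem_Icc hsupp'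
      have hnn : 0 ≤ᵐ[ν] fun x => x - a' := by
        filter_upwards [hae] with x hx
        simp only [Pi.zero_apply]
        linarith [hx.1]
      have hint2 : Integrable (fun x : ℝ => x - a') ν := by
        exact hint.sub (integrable_const a')
      have hz : (∫ x, (x - a') ∂ν) = 0 := by
        rw [integral_sub hint (integrable_const a'), integral_const, hνmean]
        simp [← h]
      have hea := (integral_eq_zero_iff_of_nonneg_ae hnn hint2).mp hz
      refine hdirac_case a' ?_
      filter_upwards [hea] with x hx
      simp only [Pi.zero_apply] at hx
      linarith [hx]
    have hmb' : m < b' := by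
      rcases lt_or_eq_of_le hm_mem.2 with h | h
      · exact h
      exfalso
      have hint : Integrable (fun x : ℝ => x) ν := integrable_of_supp hsupp'
      have hae : ∀ᵐ x ∂ν, x ∈ Set.Icc a' b' := ae_mem_Icc hsupp'
      have hnn : 0 ≤ᵐ[ν] fun x => b' - x := by
        filter_upwards [hae] with x hx
        simp only [Pi.zero_apply]
        linarith [hx.2]
      have hint2 : Integrable (fun x : ℝ => b' - x) ν := by
        exact (integrable_const b').sub hint
      have hz : (∫ x, (b' - x) ∂ν) = 0 := by
        rw [integral_sub (integrable_const b') hint, integral_const, hνmean]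
        simp [h]
      have hea := (integral_eq_zero_iff_of_nonneg_ae hnn hint2).mp hz
      refine hdirac_case b' ?_
      filter_upwards [hea] with x hx
      simp only [Pi.zero_apply] at hx
      linarith [hx]
    -- maximal stretching
    set α : ℝ := min (m/(m-a')) ((1-m)/(b'-m)) with hαdef
    have hα1 : 1 < α := by
      refine lt_min ?_ ?_
      · rw [one_lt_div (by linarith)]
        linarith
      · rw [one_lt_div (by linarith)]
        linarith
    have hαle1 : α ≤ m/(m-a') := min_le_left _ _
    have hαle2 : α ≤ (1-m)/(b'-m) := min_le_right _ _
    have hko1 : α * (m - a') ≤ m := (le_div_iff₀ (by linarith)).mp hαle1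
    have hko2 : α * (b' - m) ≤ 1 - m := (le_div_iff₀ (by linarith)).mp hαle2
    have hrange : ∀ x ∈ Set.Icc a' b', m + α * (x - m) ∈ Set.Icc (0:ℝ) 1 := by
      intro x hx
      constructor
      · have hm1' : α * (a' - m) ≤ α * (x - m) :=
          mul_le_mul_of_nonneg_left (by linarith [hx.1]) (by linarith)
        nlinarith
      · have hm2' : α * (x - m) ≤ α * (b' - m) :=
          mul_le_mul_of_nonneg_left (by linarith [hx.2]) (by linarith)
        linarith
    haveI hν'prob : IsProbabilityMeasure (ν.map (fun x => m + α * (x - m))) := stretch_prob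
    have hν'01 := stretch_supp hsupp' hrange
    have hν'mean := stretch_mean (α := α) hsupp' hνmean
    have hν'V : Vval n t ν ≤ Vval n t (ν.map (fun x => m + α * (x - m))) :=
      stretch_V n t hα1.le htmn
    have hν'max : Vval n t (ν.map (fun x => m + α * (x - m))) = pSup n m t := by
      refine le_antisymm (le_pSup hν'prob hν'01 hν'mean) ?_
      rw [← hνmax]
      exact hν'V
    have hcont : Continuous (fun x : ℝ => m + α * (x - m)) := by fun_prop
    rcases min_cases (m/(m-a')) ((1-m)/(b'-m)) with ⟨heq, _⟩ | ⟨heq, _⟩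
    · have hfa : α = m/(m-a') := by rw [hαdef, heq]
      have hf : m + α * (a' - m) = 0 := by
        have hne0 : m - a' ≠ 0 := by linarith
        rw [hfa]
        field_simp
        ring
      refine ⟨ν.map (fun x => m + α * (x - m)), hν'prob, hν'01, hν'mean, hν'max, Or.inl ?_⟩
      have := mem_measSupport_map hcont ha'mem
      rwa [hf] at this
    · have hfb : α = (1-m)/(b'-m) := by rw [hαdef, heq]
      have hf : m + α * (b' - m) = 1 := by
        have hne0 : b' - m ≠ 0 := by linarith
        rw [hfb]
        field_simp
        ring
      refine ⟨ν.map (fun x => m + α * (x - m)), hν'prob, hν'01, hν'mean, hν'max, Or.inr ?_⟩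
      have := mem_measSupport_map hcont hb'mem
      rwa [hf] at this

end Aux
end

section
/- Let ν be a Borel sub-probability measure on [0,1] with total mass 1 - ρ where ρ ≥ 0 and ∫ x dν = r ≥ m. Then, for S_n the sum of n i.i.d. variables with (sub-)law ν, one has P_ν(S_n ≤ t) ≤ p(m,t). In particular, the supremum of P(S_n ≤ t) over all sub-probability measures on [0,1] with mean at least m equals p(m,t). -/
open MeasureTheory

lemma my_prod_mono {α β : Type*} [MeasurableSpace α] [MeasurableSpace β]
    {μ₁ μ₂ : Measure α} {ν₁ ν₂ : Measure β} [SFinite ν₁] [SFinite ν₂]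
    (h1 : μ₁ ≤ μ₂) (h2 : ν₁ ≤ ν₂) : μ₁.prod ν₁ ≤ μ₂.prod ν₂ := by
  rw [Measure.le_iff]
  intro s hs
  rw [Measure.prod_apply hs, Measure.prod_apply hs]
  exact lintegral_mono' h1 fun x => h2 _

lemma my_pi_mono {n : ℕ} (μ ν : Fin n → Measure ℝ) [∀ i, IsFiniteMeasure (μ i)]
    [∀ i, IsFiniteMeasure (ν i)] (h : ∀ i, μ i ≤ ν i) :
    Measure.pi μ ≤ Measure.pi ν := by
  induction n with
  | zero =>
    rw [Measure.pi_of_empty, Measure.pi_of_empty]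
  | succ n ih =>
    rw [Measure.le_iff]
    intro s hs
    have hmeas := (MeasurableEquiv.piFinSuccAbove (fun _ : Fin (n+1) => ℝ) 0).measurable
    have key : ∀ (κ : Fin (n+1) → Measure ℝ) [∀ i, IsFiniteMeasure (κ i)],
        Measure.pi κ s = ((κ 0).prod (Measure.pi fun j => κ ((0 : Fin (n+1)).succAbove j)))
          ((MeasurableEquiv.piFinSuccAbove (fun _ : Fin (n+1) => ℝ) 0).symm ⁻¹' s) := by
      intro κ _
      rw [← (measurePreserving_piFinSuccAbove κ 0).map_eq,
        Measure.map_apply hmeas (MeasurableEquiv.measurable _ hs)]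
      congr 1
      ext x
      simp
    rw [key μ, key ν]
    exact Measure.le_iff'.1 (my_prod_mono (h 0) (ih _ _ fun j => h _)) _

lemma my_key (n : ℕ) (m t : ℝ) (hm0 : 0 < m)
    (ν : Measure ℝ) (hν1 : ν Set.univ ≤ 1) (hν2 : ν (Set.Icc (0:ℝ) 1)ᶜ = 0)
    (hνm : m ≤ (∫ x, x ∂ν)) :
    Measure.pi (fun _ : Fin n => ν) {x | ∑ i, x i ≤ t} ≤ pSup n m t := by
  haveI : IsFiniteMeasure ν := ⟨lt_of_le_of_lt hν1 ENNReal.one_lt_top⟩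
  set r := ∫ x, x ∂ν with hrdef
  have hr : 0 < r := lt_of_lt_of_le hm0 hνm
  set l := m / r with hl
  have hl0 : 0 ≤ l := div_nonneg hm0.le hr.le
  have hl1 : l ≤ 1 := (div_le_one hr).2 hνm
  set f : ℝ → ℝ := fun x => l * x with hfdef
  have hf : Measurable f := measurable_id.const_mul l
  set μ0 : Measure ℝ := ν.map f + (1 - ν Set.univ) • Measure.dirac (0:ℝ) with hμ0
  have hmapuniv : ν.map f Set.univ = ν Set.univ := by
    rw [Measure.map_apply hf MeasurableSet.univ, Set.preimage_univ]
  -- μ0 is a probability measure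
  have hprob : IsProbabilityMeasure μ0 := by
    constructor
    rw [hμ0, Measure.add_apply, Measure.smul_apply, hmapuniv,
      Measure.dirac_apply_of_mem (Set.mem_univ (0:ℝ)), smul_eq_mul, mul_one]
    exact add_tsub_cancel_of_le hν1
  -- μ0 is supported on [0,1]
  have hpre : f ⁻¹' (Set.Icc (0:ℝ) 1)ᶜ ⊆ (Set.Icc (0:ℝ) 1)ᶜ := by
    intro x hx hxI
    exact hx ⟨mul_nonneg hl0 hxI.1, mul_le_one₀ hl1 hxI.1 hxI.2⟩
  have hsupp : μ0 (Set.Icc (0:ℝ) 1)ᶜ = 0 := by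
    rw [hμ0, Measure.add_apply, Measure.map_apply hf measurableSet_Icc.compl,
      measure_mono_null hpre hν2, Measure.smul_apply,
      Measure.dirac_apply' _ measurableSet_Icc.compl]
    simp [Set.indicator_of_notMem, Set.mem_Icc, (zero_le_one (α := ℝ))]
  -- integrability
  have hb : ∀ᵐ x ∂ν, x ∈ Set.Icc (0:ℝ) 1 := by
    rw [ae_iff]
    convert hν2 using 2
    rfl
  have hint : Integrable (fun x => x) ν :=
    Integrable.mono' (integrable_const 1) measurable_id.aestronglyMeasurable
      (hb.mono fun x hx => by
        rw [Real.norm_eq_abs, abs_of_nonneg hx.1]; exact hx.2)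
  -- mean of μ0 is m
  have hintmap : Integrable (fun x => x) (ν.map f) :=
    (integrable_map_measure measurable_id'.aestronglyMeasurable hf.aemeasurable).2
      (hint.const_mul l)
  have haed : (fun _ : ℝ => (0:ℝ)) =ᵐ[Measure.dirac (0:ℝ)] fun x => x := by
    rw [Filter.EventuallyEq, ae_dirac_eq]
    exact Filter.eventually_pure.2 rfl
  have hintd : Integrable (fun x => x) ((1 - ν Set.univ) • Measure.dirac (0:ℝ)) :=
    ((integrable_const (0:ℝ)).congr haed).smul_measure
      (ne_top_of_le_ne_top ENNReal.one_ne_top tsub_le_self)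
  have hmean : (∫ x, x ∂μ0) = m := by
    rw [hμ0, integral_add_measure hintmap hintd,
      integral_map hf.aemeasurable measurable_id'.aestronglyMeasurable,
      integral_smul_measure, integral_dirac]
    simp only [hfdef, smul_eq_mul, mul_zero, add_zero]
    rw [integral_const_mul, ← hrdef, hl, div_mul_cancel₀ m hr.ne']
  -- measurability of the target set
  have hA : MeasurableSet {x : Fin n → ℝ | ∑ i, x i ≤ t} :=
    measurableSet_le (Finset.measurable_sum _ fun i _ => measurable_pi_apply i)
      measurable_const
  -- step 1: shrinking coordinates enlarges the event (up to a null set)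
  have hBc : Measure.pi (fun _ : Fin n => ν)
      (Set.pi Set.univ fun _ : Fin n => Set.Icc (0:ℝ) 1)ᶜ = 0 := by
    refine measure_mono_null (fun x hx => ?_)
      (measure_iUnion_null (s := fun i : Fin n => Function.eval i ⁻¹' (Set.Icc (0:ℝ) 1)ᶜ)
        fun i => Measure.pi_eval_preimage_null _ hν2)
    simp only [Set.mem_compl_iff, Set.mem_pi, Set.mem_univ, forall_true_left, not_forall] at hx
    obtain ⟨i, hi⟩ := hx
    exact Set.mem_iUnion.2 ⟨i, hi⟩
  have step1 : Measure.pi (fun _ : Fin n => ν) {x | ∑ i, x i ≤ t}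
      ≤ Measure.pi (fun _ : Fin n => ν) {x | ∑ i, l * x i ≤ t} := by
    calc Measure.pi (fun _ : Fin n => ν) {x | ∑ i, x i ≤ t}
        ≤ Measure.pi (fun _ : Fin n => ν) ({x | ∑ i, l * x i ≤ t}
            ∪ (Set.pi Set.univ fun _ : Fin n => Set.Icc (0:ℝ) 1)ᶜ) := by
          refine measure_mono fun x hx => ?_
          by_cases hxB : x ∈ Set.pi Set.univ fun _ : Fin n => Set.Icc (0:ℝ) 1
          · left
            show ∑ i, l * x i ≤ t
            exact le_trans
              (Finset.sum_le_sum fun i _ => mul_le_of_le_one_left (hxB i trivial).1 hl1) hx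
          · exact Or.inr hxB
      _ ≤ Measure.pi (fun _ : Fin n => ν) {x | ∑ i, l * x i ≤ t}
            + Measure.pi (fun _ : Fin n => ν)
              (Set.pi Set.univ fun _ : Fin n => Set.Icc (0:ℝ) 1)ᶜ := measure_union_le _ _
      _ = _ := by rw [hBc, add_zero]
  -- step 2: rewrite as pi of the pushforward
  have hmp : MeasurePreserving (fun (a : Fin n → ℝ) i => f (a i))
      (Measure.pi fun _ : Fin n => ν) (Measure.pi fun _ : Fin n => ν.map f) :=
    measurePreserving_pi _ _ fun i => ⟨hf, rfl⟩
  have step2 : Measure.pi (fun _ : Fin n => ν) {x | ∑ i, l * x i ≤ t}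
      = Measure.pi (fun _ : Fin n => ν.map f) {x | ∑ i, x i ≤ t} := by
    rw [← hmp.map_eq, Measure.map_apply hmp.measurable hA]
    rfl
  -- step 3: monotonicity of product measures
  haveI : IsFiniteMeasure μ0 := by haveI := hprob; infer_instance
  have step3 : Measure.pi (fun _ : Fin n => ν.map f) {x | ∑ i, x i ≤ t}
      ≤ Measure.pi (fun _ : Fin n => μ0) {x | ∑ i, x i ≤ t} :=
    Measure.le_iff'.1 (my_pi_mono _ _ fun i => Measure.le_add_right le_rfl) _
  refine le_trans step1 (le_trans (le_of_eq step2) (le_trans step3 ?_))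
  unfold pSup
  exact le_iSup₂ (f := fun (μ : Measure ℝ)
    (_ : IsProbabilityMeasure μ ∧ μ (Set.Icc (0:ℝ) 1)ᶜ = 0 ∧ (∫ x, x ∂μ) = m) =>
      Measure.pi (fun _ : Fin n => μ) {x | ∑ i, x i ≤ t}) μ0 ⟨hprob, hsupp, hmean⟩

/-- Any sub-probability measure `ν` on `[0,1]` with mean at least `m` satisfies
`P_ν(S_n ≤ t) ≤ p(m,t)`; in particular the supremum over all such sub-probability
measures equals `p(m,t)`. -/
theorem stmt_7 (n : ℕ) (m t : ℝ) (hm0 : 0 < m) (hm1 : m < 1)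
    (ht0 : 0 ≤ t) (ht : t < m * n) :
    (∀ ν : Measure ℝ, ν Set.univ ≤ 1 → ν (Set.Icc (0:ℝ) 1)ᶜ = 0 →
      m ≤ (∫ x, x ∂ν) →
      Measure.pi (fun _ : Fin n => ν) {x | ∑ i, x i ≤ t} ≤ pSup n m t) ∧
    (⨆ (ν : Measure ℝ) (_ : ν Set.univ ≤ 1 ∧ ν (Set.Icc (0:ℝ) 1)ᶜ = 0 ∧
        m ≤ (∫ x, x ∂ν)),
      Measure.pi (fun _ : Fin n => ν) {x | ∑ i, x i ≤ t}) = pSup n m t := by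
  constructor
  · exact fun ν h1 h2 h3 => my_key n m t hm0 ν h1 h2 h3
  · refine le_antisymm
      (iSup₂_le fun ν h => my_key n m t hm0 ν h.1 h.2.1 h.2.2) ?_
    rw [show pSup n m t = ⨆ (μ : Measure ℝ) (_ : IsProbabilityMeasure μ ∧
        μ (Set.Icc (0:ℝ) 1)ᶜ = 0 ∧ (∫ x, x ∂μ) = m),
        Measure.pi (fun _ : Fin n => μ) {x | ∑ i, x i ≤ t} from rfl]
    refine iSup₂_le fun μ h => ?_
    exact le_iSup₂ (f := fun (μ : Measure ℝ)
      (_ : μ Set.univ ≤ 1 ∧ μ (Set.Icc (0:ℝ) 1)ᶜ = 0 ∧ m ≤ (∫ x, x ∂μ)) =>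
        Measure.pi (fun _ : Fin n => μ) {x | ∑ i, x i ≤ t}) μ
      ⟨by rw [h.1.measure_univ], h.2.1, le_of_eq h.2.2.symm⟩
end

section
/- Fix 0 ≤ t < 2m < 2. Let π be the two-point probability measure on {t/2, 1} with π({1}) = (m - t/2)/(1 - t/2). Then π is a probability measure on [0,1] with mean m and, for X₁, X₂ i.i.d. with law π, P(X₁ + X₂ ≤ t) = ((1-m)/(1-t/2))². -/
open MeasureTheory

/-- The two-point measure on `{t/2, 1}` with `π({1}) = (m - t/2)/(1 - t/2)` is a
probability measure on `[0,1]` with mean `m` and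
`P(X₁ + X₂ ≤ t) = ((1-m)/(1-t/2))²`. -/
theorem stmt_10 (m t : ℝ) (hm0 : 0 < m) (hm1 : m < 1) (ht0 : 0 ≤ t) (ht : t < 2 * m)
    (π : Measure ℝ)
    (hπ : π = ENNReal.ofReal ((1 - m) / (1 - t / 2)) • Measure.dirac (t / 2)
            + ENNReal.ofReal ((m - t / 2) / (1 - t / 2)) • Measure.dirac (1:ℝ)) :
    IsProbabilityMeasure π ∧ π (Set.Icc (0:ℝ) 1)ᶜ = 0 ∧ (∫ x, x ∂π) = m ∧
      (π.prod π) {p : ℝ × ℝ | p.1 + p.2 ≤ t}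
        = ENNReal.ofReal (((1 - m) / (1 - t / 2)) ^ 2) := by
  have ht2 : t / 2 < m := by linarith
  have hden : 0 < 1 - t / 2 := by linarith
  set a : ℝ := (1 - m) / (1 - t / 2) with ha
  set b : ℝ := (m - t / 2) / (1 - t / 2) with hb
  have ha0 : 0 ≤ a := div_nonneg (by linarith) hden.le
  have hb0 : 0 ≤ b := div_nonneg (by linarith) hden.le
  have hab : a + b = 1 := by
    rw [ha, hb, ← add_div, div_eq_one_iff_eq hden.ne']
    ring
  have hprob : IsProbabilityMeasure π := by
    constructor
    rw [hπ]
    simp [Measure.add_apply, ← ENNReal.ofReal_add ha0 hb0, hab]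
  refine ⟨hprob, ?_, ?_, ?_⟩
  · rw [hπ]
    have h1 : (t/2) ∈ Set.Icc (0:ℝ) 1 := ⟨by linarith, by linarith⟩
    have h2 : (1:ℝ) ∈ Set.Icc (0:ℝ) 1 := ⟨by linarith, le_refl _⟩
    simp [Measure.add_apply, Measure.dirac_apply, h1, h2]
  · have hint : ∀ c : ℝ, Integrable (fun x : ℝ => x) (Measure.dirac c) := fun c =>
      (integrable_const c).congr (MeasureTheory.ae_eq_dirac (fun x : ℝ => x)).symm
    rw [hπ]
    rw [integral_add_measure ((hint _).smul_measure ENNReal.ofReal_ne_top)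
      ((hint _).smul_measure ENNReal.ofReal_ne_top)]
    rw [integral_smul_measure, integral_smul_measure, integral_dirac, integral_dirac,
      ENNReal.toReal_ofReal ha0, ENNReal.toReal_ofReal hb0]
    rw [ha, hb, smul_eq_mul, smul_eq_mul, div_mul_eq_mul_div, mul_one,
      ← add_div, div_eq_iff hden.ne']
    ring
  · have hS : MeasurableSet {p : ℝ × ℝ | p.1 + p.2 ≤ t} :=
      measurableSet_le (by fun_prop) measurable_const
    have key : ∀ x : ℝ, π (Prod.mk x ⁻¹' {p : ℝ × ℝ | p.1 + p.2 ≤ t})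
        = π {y : ℝ | x + y ≤ t} := fun x => rfl
    rw [Measure.prod_apply hS]
    conv_lhs => rw [hπ]
    rw [lintegral_add_measure, lintegral_smul_measure, lintegral_smul_measure,
      lintegral_dirac, lintegral_dirac, ← hπ, key, key]
    have hv1 : π {y : ℝ | t/2 + y ≤ t} = ENNReal.ofReal a := by
      rw [hπ]
      have m1 : t/2 ∈ {y : ℝ | t/2 + y ≤ t} := by simp only [Set.mem_setOf_eq]; linarith
      have m2 : (1:ℝ) ∉ {y : ℝ | t/2 + y ≤ t} := by
        simp only [Set.mem_setOf_eq]; push_neg; linarith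
      simp [Measure.add_apply, Measure.dirac_apply, m1, m2]
    have hv2 : π {y : ℝ | 1 + y ≤ t} = 0 := by
      rw [hπ]
      have m1 : t/2 ∉ {y : ℝ | 1 + y ≤ t} := by
        simp only [Set.mem_setOf_eq]; push_neg; linarith
      have m2 : (1:ℝ) ∉ {y : ℝ | 1 + y ≤ t} := by
        simp only [Set.mem_setOf_eq]; push_neg; linarith
      simp [Measure.add_apply, Measure.dirac_apply, m1, m2]
    rw [hv1, hv2, smul_eq_mul, smul_eq_mul, mul_zero, add_zero, ← ENNReal.ofReal_mul ha0, sq]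
end

section
/- Fix 0 ≤ t - 1 ≤ s ≤ t/2 < 1 and 0 < m < 1, and suppose (1-m)(1-s) < (1-t+s)(1+t-3s). Define λ = (1-m)/((1-t+s)(1+t-3s)) and the three-point measure π on {s, t-s, 1} with π({s}) = λ(1-t+s), π({t-s}) = λ(t-2s), π({1}) = 1 - λ(1-s). Then π is a probability measure with mean m, and for X₁, X₂ i.i.d. with law π, P(X₁ + X₂ ≤ t) = (1-m)²/((1-t+s)(1+t-3s)). -/
open MeasureTheory
open scoped ENNReal

/-- The candidate three-point solution on `{s, t-s, 1}`: under the feasibility condition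
`(1-m)(1-s) < (1-t+s)(1+t-3s)`, with `λ = (1-m)/((1-t+s)(1+t-3s))`, the measure with
masses `λ(1-t+s)` at `s`, `λ(t-2s)` at `t-s` and `1-λ(1-s)` at `1` is a probability
measure with mean `m`, and `P(X₁+X₂ ≤ t) = (1-m)²/((1-t+s)(1+t-3s))`. -/
theorem stmt_17 (s t m : ℝ) (hs0 : 0 ≤ s) (hst1 : t - 1 ≤ s) (hs : s ≤ t / 2)
    (ht2 : t / 2 < 1) (hm0 : t / 2 < m) (hm1 : m < 1)
    (hfeas : (1 - m) * (1 - s) < (1 - t + s) * (1 + t - 3 * s))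
    (lam : ℝ) (hlam : lam = (1 - m) / ((1 - t + s) * (1 + t - 3 * s)))
    (π : Measure ℝ)
    (hπ : π = ENNReal.ofReal (lam * (1 - t + s)) • Measure.dirac s
            + ENNReal.ofReal (lam * (t - 2 * s)) • Measure.dirac (t - s)
            + ENNReal.ofReal (1 - lam * (1 - s)) • Measure.dirac (1:ℝ)) :
    IsProbabilityMeasure π ∧ π (Set.Icc (0:ℝ) 1)ᶜ = 0 ∧ (∫ x, x ∂π) = m ∧
      (π.prod π) {p : ℝ × ℝ | p.1 + p.2 ≤ t}
        = ENNReal.ofReal ((1 - m) ^ 2 / ((1 - t + s) * (1 + t - 3 * s))) := by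
  -- basic positivity facts
  have hs1 : s < 1 := lt_of_le_of_lt hs ht2
  have hB : 0 < 1 + t - 3 * s := by nlinarith
  have hA : 0 < 1 - t + s := by nlinarith [mul_pos (sub_pos.2 hm1) (sub_pos.2 hs1)]
  have hAB : 0 < (1 - t + s) * (1 + t - 3 * s) := mul_pos hA hB
  have hlam0 : 0 < lam := by rw [hlam]; exact div_pos (by linarith) hAB
  have hp1 : 0 ≤ lam * (1 - t + s) := mul_nonneg hlam0.le hA.le
  have hp2 : 0 ≤ lam * (t - 2 * s) := by nlinarith
  have hp3 : 0 ≤ 1 - lam * (1 - s) := by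
    have h : lam * (1 - s) < 1 := by
      rw [hlam, div_mul_eq_mul_div, div_lt_one hAB]
      exact hfeas
    linarith
  have hsum : lam * (1 - t + s) + lam * (t - 2 * s) + (1 - lam * (1 - s)) = 1 := by ring
  have hlamAB : lam * ((1 - t + s) * (1 + t - 3 * s)) = 1 - m := by
    rw [hlam]; field_simp
    exact mul_div_cancel_right₀ _ (by linarith)
  -- probability measure
  have hprob : IsProbabilityMeasure π := by
    constructor
    rw [hπ]
    simp only [Measure.add_apply, Measure.smul_apply, Measure.dirac_apply' _ MeasurableSet.univ,
      Set.indicator_univ, smul_eq_mul, mul_one, Pi.one_apply]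
    rw [← ENNReal.ofReal_add hp1 hp2, ← ENNReal.ofReal_add (by linarith) hp3, hsum,
      ENNReal.ofReal_one]
  refine ⟨hprob, ?_, ?_, ?_⟩
  · -- support in [0,1]
    have h01 : ∀ a : ℝ, a ∈ Set.Icc (0:ℝ) 1 → Measure.dirac a (Set.Icc (0:ℝ) 1)ᶜ = 0 := by
      intro a ha
      rw [Measure.dirac_apply' _ measurableSet_Icc.compl,
        Set.indicator_of_notMem (by simpa using ha)]
    rw [hπ]
    simp only [Measure.add_apply, Measure.smul_apply, smul_eq_mul]
    rw [h01 s ⟨hs0, hs1.le⟩, h01 (t - s) ⟨by linarith, by linarith⟩,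
      h01 1 ⟨by norm_num, le_refl _⟩]
    simp
  · -- mean
    have hint : ∀ (c : ℝ≥0∞) (a : ℝ), c ≠ ⊤ → Integrable (fun x : ℝ => x) (c • Measure.dirac a) := by
      intro c a hc
      refine Integrable.smul_measure ?_ hc
      refine ⟨measurable_id.aestronglyMeasurable, ?_⟩
      rw [HasFiniteIntegral, lintegral_dirac]
      exact ENNReal.coe_lt_top
    have h1 := hint (ENNReal.ofReal (lam * (1 - t + s))) s ENNReal.ofReal_ne_top
    have h2 := hint (ENNReal.ofReal (lam * (t - 2 * s))) (t - s) ENNReal.ofReal_ne_top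
    have h3 := hint (ENNReal.ofReal (1 - lam * (1 - s))) 1 ENNReal.ofReal_ne_top
    rw [hπ, integral_add_measure (h1.add_measure h2) h3, integral_add_measure h1 h2,
      integral_smul_measure, integral_smul_measure, integral_smul_measure,
      integral_dirac, integral_dirac, integral_dirac,
      ENNReal.toReal_ofReal hp1, ENNReal.toReal_ofReal hp2, ENNReal.toReal_ofReal hp3]
    simp only [smul_eq_mul]
    nlinarith [hlamAB]
  · -- the probability of X₁ + X₂ ≤ t
    have hSmeas : MeasurableSet {p : ℝ × ℝ | p.1 + p.2 ≤ t} :=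
      measurableSet_le (measurable_fst.add measurable_snd) measurable_const
    haveI := hprob
    rw [Measure.prod_apply hSmeas]
    have hpre : ∀ x : ℝ, (Prod.mk x ⁻¹' {p : ℝ × ℝ | p.1 + p.2 ≤ t}) = Set.Iic (t - x) := by
      intro x; ext y; simp [Set.mem_Iic]; constructor <;> intro h <;> linarith
    simp only [hpre]
    have hπIic : ∀ x : ℝ, π (Set.Iic x) =
        ENNReal.ofReal (lam * (1 - t + s)) * (Set.Iic x).indicator 1 s
        + ENNReal.ofReal (lam * (t - 2 * s)) * (Set.Iic x).indicator 1 (t - s)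
        + ENNReal.ofReal (1 - lam * (1 - s)) * (Set.Iic x).indicator 1 1 := by
      intro x
      rw [hπ]
      simp only [Measure.add_apply, Measure.smul_apply, smul_eq_mul,
        Measure.dirac_apply' _ measurableSet_Iic]
    have L : ∀ f : ℝ → ℝ≥0∞, ∫⁻ x, f x ∂π
        = ENNReal.ofReal (lam * (1 - t + s)) * f s
        + ENNReal.ofReal (lam * (t - 2 * s)) * f (t - s)
        + ENNReal.ofReal (1 - lam * (1 - s)) * f 1 := by
      intro f
      rw [hπ, lintegral_add_measure, lintegral_add_measure,
        lintegral_smul_measure, lintegral_smul_measure, lintegral_smul_measure,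
        lintegral_dirac, lintegral_dirac, lintegral_dirac]
      simp only [smul_eq_mul]
    rw [L (fun x => π (Set.Iic (t - x)))]
    rw [hπIic (t - s), hπIic (t - (t - s)), hπIic (t - 1)]
    have e1 : (Set.Iic (t - s)).indicator (1 : ℝ → ℝ≥0∞) s = 1 :=
      Set.indicator_of_mem (by simp [Set.mem_Iic]; linarith) 1
    have e2 : (Set.Iic (t - s)).indicator (1 : ℝ → ℝ≥0∞) (t - s) = 1 :=
      Set.indicator_of_mem (by simp [Set.mem_Iic]) 1
    have e3 : (Set.Iic (t - s)).indicator (1 : ℝ → ℝ≥0∞) 1 = 0 :=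
      Set.indicator_of_notMem (by simp [Set.mem_Iic]; linarith) 1
    have e4 : (Set.Iic (t - (t - s))).indicator (1 : ℝ → ℝ≥0∞) s = 1 :=
      Set.indicator_of_mem (by simp [Set.mem_Iic]) 1
    have e6 : (Set.Iic (t - (t - s))).indicator (1 : ℝ → ℝ≥0∞) 1 = 0 :=
      Set.indicator_of_notMem (by simp [Set.mem_Iic]; linarith) 1
    have e7 : (Set.Iic (t - 1)).indicator (1 : ℝ → ℝ≥0∞) s = 0 := by
      refine Set.indicator_of_notMem (by simp [Set.mem_Iic]; nlinarith) 1
    have e8 : (Set.Iic (t - 1)).indicator (1 : ℝ → ℝ≥0∞) (t - s) = 0 :=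
      Set.indicator_of_notMem (by simp [Set.mem_Iic]; linarith) 1
    have e9 : (Set.Iic (t - 1)).indicator (1 : ℝ → ℝ≥0∞) 1 = 0 :=
      Set.indicator_of_notMem (by simp [Set.mem_Iic]; linarith) 1
    rw [e1, e2, e3, e4, e6, e7, e8, e9]
    have goalreal : lam * (1 - t + s) * (lam * (1 - t + s) + lam * (t - 2 * s))
        + lam * (t - 2 * s) * (lam * (1 - t + s)) =
        (1 - m) ^ 2 / ((1 - t + s) * (1 + t - 3 * s)) := by
      have : lam * (1 - t + s) * (lam * (1 - t + s) + lam * (t - 2 * s))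
          + lam * (t - 2 * s) * (lam * (1 - t + s))
          = lam * (lam * ((1 - t + s) * (1 + t - 3 * s))) := by ring
      rw [this, hlamAB, hlam]
      field_simp
    by_cases hts : t - (t - s) < s
    · exfalso; linarith
    push_neg at hts
    -- t - (t-s) = s, so always s ≤ t - (t-s) iff t ≤ 2s; here s ≤ t - (t-s) always since equal
    have e5 : (Set.Iic (t - (t - s))).indicator (1 : ℝ → ℝ≥0∞) (t - s) =
        if t - s ≤ s then 1 else 0 := by
      by_cases h : t - s ≤ s
      · rw [Set.indicator_of_mem (by simp [Set.mem_Iic]; linarith) 1, if_pos h, Pi.one_apply]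
      · rw [Set.indicator_of_notMem (by simp [Set.mem_Iic]; linarith [not_le.mp h]) 1,
          if_neg h]
    rw [e5]
    by_cases h : t - s ≤ s
    · -- t = 2s case, the middle mass is zero
      have hts2 : t = 2 * s := by linarith
      have hz : ENNReal.ofReal (lam * (t - 2 * s)) = 0 := by
        rw [hts2]; simp
      rw [if_pos h, hz]
      simp only [zero_mul, mul_zero, add_zero, mul_one, mul_zero]
      rw [← ENNReal.ofReal_mul hp1, ← goalreal]
      rw [hts2]
      ring_nf
    · rw [if_neg h]
      simp only [mul_one, mul_zero, add_zero, mul_zero, zero_add]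
      rw [← ENNReal.ofReal_add hp1 hp2, ← ENNReal.ofReal_mul hp1, ← ENNReal.ofReal_mul hp2,
        ← ENNReal.ofReal_add (by positivity) (by positivity), ← goalreal]
end
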